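/- arXiv:math/0604594 — 4 statements merged into one kernel-verified Lean document; each statement's English description precedes it below -/
import Mathlib

section
/- Let K ⊂ ℝⁿ be a centrally symmetric convex body of volume 1 which is 2-convex with constant α > 0. Fix a unit vector θ ∈ S^{n−1} and let w = sup_{x∈K} |⟨x,θ⟩|. Then for every t > 0, the Lebesgue measure of {x ∈ K : ⟨x,θ⟩ > t} is at most 2·exp(−2αn(t/w)²). -/
open MeasureTheory
open scoped RealInnerProductSpace

noncomputable section

/-- A centrally symmetric convex body: compact, convex, with nonempty interior,
and symmetric about the origin. -/
def IsSymmConvexBody {E : Type*} [NormedAddCommGroup E] [NormedSpace ℝ E]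
    (K : Set E) : Prop :=
  IsCompact K ∧ Convex ℝ K ∧ (interior K).Nonempty ∧ K = -K

/-- The modulus of convexity of `K`, defined via the gauge (Minkowski functional) of `K`. -/
def modulusOfConvexity {E : Type*} [AddCommGroup E] [Module ℝ E]
    (K : Set E) (ε : ℝ) : ℝ :=
  sInf { d | ∃ x y : E, gauge K x ≤ 1 ∧ gauge K y ≤ 1 ∧ ε ≤ gauge K (x - y) ∧
    d = 1 - gauge K ((2:ℝ)⁻¹ • (x + y)) }

/-- `K` is 2-convex with constant `α`: `δ_K(ε) ≥ α ε²` for all `0 < ε ≤ 2`. -/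
def IsTwoConvex {E : Type*} [AddCommGroup E] [Module ℝ E]
    (K : Set E) (α : ℝ) : Prop :=
  ∀ ε : ℝ, 0 < ε → ε ≤ 2 → α * ε ^ 2 ≤ modulusOfConvexity K ε

open Set
open scoped Pointwise ENNReal


lemma vol_add_of_compact {S T : Set ℝ} (hS : IsCompact S) (hT : IsCompact T)
    (hSn : S.Nonempty) (hTn : T.Nonempty) :
    volume S + volume T ≤ volume (S + T) := by
  obtain ⟨a, haS, ha⟩ := hS.exists_isLeast hSn
  obtain ⟨b, hbT, hb⟩ := hT.exists_isGreatest hTn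
  set U : Set ℝ := (fun x => x + b) '' S with hU
  set V : Set ℝ := (fun x => a + x) '' T with hV
  have hUvol : volume U = volume S := by
    have : U = (fun x => x + (-b)) ⁻¹' S := by
      ext x
      simp only [hU, Set.mem_image, Set.mem_preimage]
      constructor
      · rintro ⟨s, hs, rfl⟩; simpa using hs
      · intro h; exact ⟨x + (-b), h, by ring⟩
    rw [this, measure_preimage_add_right]
  have hVvol : volume V = volume T := by
    have : V = (fun x => (-a) + x) ⁻¹' T := by
      ext x
      simp only [hV, Set.mem_image, Set.mem_preimage]
      constructor
      · rintro ⟨s, hs, rfl⟩; simpa using hs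
      · intro h; exact ⟨(-a) + x, h, by ring⟩
    rw [this, measure_preimage_add]
  have hsub : (U \ {a + b}) ∪ V ⊆ S + T := by
    rintro z (⟨⟨s, hs, rfl⟩, -⟩ | ⟨s, hs, rfl⟩)
    · exact add_mem_add hs hbT
    · exact add_mem_add haS hs
  have hd : Disjoint (U \ {a + b}) V := by
    rw [Set.disjoint_left]
    rintro z ⟨⟨s, hs, rfl⟩, hz⟩ ⟨u, hu, huz⟩
    apply hz
    have h1 : s + b ≤ a + b := by
      have : a + u = s + b := huz
      rw [← this]; exact add_le_add_right (hb hu) a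
    have h2 : a + b ≤ s + b := add_le_add_left (ha hs) b
    simp [le_antisymm h1 h2]
  have hVm : MeasurableSet V := (hT.image (continuous_add_left a)).measurableSet
  calc volume S + volume T = volume (U \ {a + b}) + volume V := by
        rw [measure_diff_null (by simp), hUvol, hVvol]
    _ = volume ((U \ {a + b}) ∪ V) := (measure_union hd hVm).symm
    _ ≤ volume (S + T) := measure_mono hsub

lemma vol_smul_real {S : Set ℝ} {a : ℝ} (ha : 0 ≤ a) :
    volume (a • S) = ENNReal.ofReal a * volume S := by
  rw [Measure.addHaar_smul]
  congr 1
  rw [Module.finrank_self, pow_one, abs_of_nonneg ha]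

lemma vol_smul_add_of_compact {S T : Set ℝ} (hS : IsCompact S) (hT : IsCompact T)
    (hSn : S.Nonempty) (hTn : T.Nonempty) {a b : ℝ} (ha : 0 ≤ a) (hb : 0 ≤ b) :
    ENNReal.ofReal a * volume S + ENNReal.ofReal b * volume T ≤ volume (a • S + b • T) := by
  calc ENNReal.ofReal a * volume S + ENNReal.ofReal b * volume T
      = volume (a • S) + volume (b • T) := by rw [vol_smul_real ha, vol_smul_real hb]
    _ ≤ volume (a • S + b • T) :=
        vol_add_of_compact (hS.smul a) (hT.smul b) (hSn.smul_set) (hTn.smul_set)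

lemma nonempty_of_vol_pos {S : Set ℝ} (h : (0:ℝ≥0∞) < volume S) : S.Nonempty := by
  rcases S.eq_empty_or_nonempty with rfl | hS
  · simp at h
  · exact hS

section KeyStep
variable {m : ℕ}

local notation "E" => (Fin m → ℝ)

lemma key_step
    (IH : ∀ C : Set (Fin m → ℝ), Convex ℝ C → IsCompact C →
      volume C ≤ volume ((2:ℝ)⁻¹ • (C - C)))
    (A : Set (ℝ × (Fin m → ℝ))) (hAco : Convex ℝ A) (hAcp : IsCompact A) :
    volume A ≤ volume ((2:ℝ)⁻¹ • (A - A)) := by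
  classical
  set M : Set (ℝ × E) := (2:ℝ)⁻¹ • (A - A) with hMdef
  have hsubcp : IsCompact (A - A) := by
    have : A - A = A + (-A) := sub_eq_add_neg A A
    rw [this]; exact hAcp.add hAcp.neg
  have hMcp : IsCompact M := hsubcp.smul _
  -- fibers
  set fib : Set (ℝ × E) → E → Set ℝ := fun B y => (fun r => (r, y)) ⁻¹' B with hfib
  have fib_cp : ∀ (B : Set (ℝ × E)), IsCompact B → ∀ y, IsCompact (fib B y) := by
    intro B hB y
    refine IsCompact.of_isClosed_subset (hB.image continuous_fst)
      (hB.isClosed.preimage (continuous_id.prodMk continuous_const)) ?_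
    intro r hr
    exact ⟨(r, y), hr, rfl⟩
  set f : E → ℝ≥0∞ := fun y => volume (fib A y) with hfdef
  set F : E → ℝ≥0∞ := fun y => volume (fib M y) with hFdef
  have hf_ne_top : ∀ y, f y ≠ ⊤ := fun y => (fib_cp A hAcp y).measure_lt_top.ne
  have hF_ne_top : ∀ y, F y ≠ ⊤ := fun y => (fib_cp M hMcp y).measure_lt_top.ne
  have hf_mble : Measurable f := measurable_measure_prodMk_right hAcp.measurableSet
  have hF_mble : Measurable F := measurable_measure_prodMk_right hMcp.measurableSet
  -- Fubini
  have hvolA : volume A = ∫⁻ y, f y := by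
    rw [Measure.volume_eq_prod, Measure.prod_apply_symm hAcp.measurableSet]
  have hvolM : volume M = ∫⁻ y, F y := by
    rw [Measure.volume_eq_prod, Measure.prod_apply_symm hMcp.measurableSet]
  -- layer cake
  have lc : ∀ (g : E → ℝ≥0∞), Measurable g → (∀ y, g y ≠ ⊤) →
      ∫⁻ y, g y = ∫⁻ t in Ioi (0:ℝ), volume {y | ENNReal.ofReal t ≤ g y} := by
    intro g hm hnt
    have h1 : ∫⁻ y, g y = ∫⁻ y, ENNReal.ofReal ((g y).toReal) := by
      apply lintegral_congr
      intro y
      rw [ENNReal.ofReal_toReal (hnt y)]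
    rw [h1, lintegral_eq_lintegral_meas_le volume
      (Filter.Eventually.of_forall fun y => ENNReal.toReal_nonneg)
      (hm.ennreal_toReal.aemeasurable)]
    apply lintegral_congr_ae
    filter_upwards [self_mem_ae_restrict measurableSet_Ioi] with t ht
    congr 1
    ext y
    simp only [Set.mem_setOf_eq]
    rw [← ENNReal.ofReal_le_iff_le_toReal (hnt y)]
  -- pointwise superlevel comparison
  have key : ∀ t : ℝ, 0 < t →
      volume {y | ENNReal.ofReal t ≤ f y} ≤ volume {y | ENNReal.ofReal t ≤ F y} := by
    intro t ht
    set C : Set E := {y | ENNReal.ofReal t ≤ f y} with hCdef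
    have htpos : (0:ℝ≥0∞) < ENNReal.ofReal t := ENNReal.ofReal_pos.2 ht
    have fib_ne : ∀ y ∈ C, (fib A y).Nonempty := by
      intro y hy
      exact nonempty_of_vol_pos (lt_of_lt_of_le htpos hy)
    -- convexity of C
    have hCco : Convex ℝ C := by
      intro y₁ hy₁ y₂ hy₂ a b ha hb hab
      have hsub : a • (fib A y₁) + b • (fib A y₂) ⊆ fib A (a • y₁ + b • y₂) := by
        rintro r ⟨r₁, ⟨s₁, hs₁, rfl⟩, r₂, ⟨s₂, hs₂, rfl⟩, rfl⟩
        have := hAco hs₁ hs₂ ha hb hab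
        simpa [hfib, Prod.smul_mk, Prod.mk_add_mk] using this
      have hle := vol_smul_add_of_compact (fib_cp A hAcp y₁) (fib_cp A hAcp y₂)
        (fib_ne y₁ hy₁) (fib_ne y₂ hy₂) ha hb
      have : ENNReal.ofReal t ≤ ENNReal.ofReal a * f y₁ + ENNReal.ofReal b * f y₂ := by
        calc ENNReal.ofReal t = ENNReal.ofReal a * ENNReal.ofReal t
              + ENNReal.ofReal b * ENNReal.ofReal t := by
              rw [← ENNReal.ofReal_mul ha, ← ENNReal.ofReal_mul hb, ← ENNReal.ofReal_add
                (by positivity) (by positivity)]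
              rw [← add_mul, hab, one_mul]
          _ ≤ _ := add_le_add (mul_le_mul_right hy₁ _) (mul_le_mul_right hy₂ _)
      exact le_trans this (le_trans hle (measure_mono hsub))
    -- closedness of C
    have hCcl : IsClosed C := by
      rw [← isOpen_compl_iff]
      rw [isOpen_iff_mem_nhds]
      intro y hy
      have hy' : f y < ENNReal.ofReal t := by
        simpa [hCdef, not_le] using hy
      obtain ⟨U, hUsub, hUopen, hUvol⟩ := Set.exists_isOpen_lt_of_lt _ _ hy'
      set B : Set (ℝ × E) := A ∩ (Prod.fst ⁻¹' Uᶜ) with hBdef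
      have hBcp : IsCompact B :=
        hAcp.inter_right (hUopen.isClosed_compl.preimage continuous_fst)
      have hPcl : IsClosed (Prod.snd '' B) := (hBcp.image continuous_snd).isClosed
      have hyP : y ∉ Prod.snd '' B := by
        rintro ⟨⟨r, y'⟩, ⟨hrA, hrU⟩, rfl⟩
        exact hrU (hUsub hrA)
      refine Filter.mem_of_superset (hPcl.isOpen_compl.mem_nhds hyP) ?_
      intro y' hy'P
      simp only [Set.mem_compl_iff, hCdef, Set.mem_setOf_eq, not_le]
      have hfibU : fib A y' ⊆ U := by
        intro r hr
        by_contra hrU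
        exact hy'P ⟨(r, y'), ⟨hr, hrU⟩, rfl⟩
      exact lt_of_le_of_lt (measure_mono hfibU) hUvol
    rcases C.eq_empty_or_nonempty with hCe | hCne
    · rw [hCe]; simp
    -- compactness of C
    have hCcp : IsCompact C := by
      refine IsCompact.of_isClosed_subset (hAcp.image continuous_snd) hCcl ?_
      intro y hy
      obtain ⟨r, hr⟩ := fib_ne y hy
      exact ⟨(r, y), hr, rfl⟩
    -- inclusion of the half difference set into superlevel of F
    have hinc : (2:ℝ)⁻¹ • (C - C) ⊆ {y | ENNReal.ofReal t ≤ F y} := by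
      rintro u ⟨v, ⟨y₁, hy₁, y₂, hy₂, rfl⟩, rfl⟩
      have hsub : (2:ℝ)⁻¹ • (fib A y₁) + (2:ℝ)⁻¹ • (-(fib A y₂)) ⊆ fib M ((2:ℝ)⁻¹ • (y₁ - y₂)) := by
        rintro r ⟨r₁, ⟨s₁, hs₁, rfl⟩, r₂, ⟨s₂, hs₂, rfl⟩, rfl⟩
        have hs₂' : ((-s₂, y₂) : ℝ × E) ∈ A := Set.mem_neg.mp hs₂
        refine ⟨((s₁, y₁) : ℝ × E) - (-s₂, y₂), sub_mem_sub hs₁ hs₂', Prod.ext ?_ rfl⟩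
        show (2:ℝ)⁻¹ • (s₁ - -s₂) = (2:ℝ)⁻¹ • s₁ + (2:ℝ)⁻¹ • s₂
        simp only [smul_eq_mul]
        ring
      have h1 := vol_smul_add_of_compact (fib_cp A hAcp y₁) ((fib_cp A hAcp y₂).neg)
        (fib_ne y₁ hy₁) ((fib_ne y₂ hy₂).neg)
        (by norm_num : (0:ℝ) ≤ 2⁻¹) (by norm_num : (0:ℝ) ≤ 2⁻¹)
      rw [Measure.measure_neg] at h1
      have h2 : ENNReal.ofReal t ≤ ENNReal.ofReal 2⁻¹ * f y₁ + ENNReal.ofReal 2⁻¹ * f y₂ := by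
        calc ENNReal.ofReal t = ENNReal.ofReal 2⁻¹ * ENNReal.ofReal t
              + ENNReal.ofReal 2⁻¹ * ENNReal.ofReal t := by
              rw [← ENNReal.ofReal_mul (by norm_num : (0:ℝ) ≤ 2⁻¹),
                ← ENNReal.ofReal_add (by positivity) (by positivity)]
              congr 1
              ring
          _ ≤ _ := add_le_add (mul_le_mul_right hy₁ _) (mul_le_mul_right hy₂ _)
      show ENNReal.ofReal t ≤ F ((2:ℝ)⁻¹ • (y₁ - y₂))
      exact h2.trans (h1.trans (measure_mono hsub))
    calc volume C ≤ volume ((2:ℝ)⁻¹ • (C - C)) := IH C hCco hCcp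
      _ ≤ volume {y | ENNReal.ofReal t ≤ F y} := measure_mono hinc
  -- stitch
  rw [hvolA, hvolM, lc f hf_mble hf_ne_top, lc F hF_mble hF_ne_top]
  refine setLIntegral_mono ?_ ?_
  · apply Antitone.measurable
    intro t₁ t₂ h12
    apply measure_mono
    intro y hy
    exact le_trans (ENNReal.ofReal_le_ofReal h12) hy
  · intro t ht
    exact key t ht

end KeyStep

lemma vol_img {X Y : Type*} [MeasureSpace X] [MeasureSpace Y] (e : X ≃ᵐ Y)
    (hmp : MeasurePreserving e) (S : Set X) (hS : NullMeasurableSet S) :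
    volume (⇑e '' S) = volume S := by
  rw [MeasurableEquiv.image_eq_preimage_symm]
  exact (MeasurePreserving.symm e hmp).measure_preimage hS

lemma diff_pi : ∀ (m : ℕ) (A : Set (Fin m → ℝ)), Convex ℝ A → IsCompact A →
    volume A ≤ volume ((2:ℝ)⁻¹ • (A - A)) := by
  intro m
  induction m with
  | zero =>
    intro A hco hcp
    rcases A.eq_empty_or_nonempty with rfl | ⟨x, hx⟩
    · simp
    · have hU : (2:ℝ)⁻¹ • (A - A) = univ := by
        apply Set.eq_univ_of_forall
        intro y
        have hy : y = (2:ℝ)⁻¹ • (x - x) := Subsingleton.elim _ _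
        rw [hy]
        exact ⟨x - x, sub_mem_sub hx hx, rfl⟩
      rw [hU]
      exact measure_mono (subset_univ A)
  | succ m IH =>
    intro A hco hcp
    set e := MeasurableEquiv.piFinSuccAbove (fun _ : Fin (m+1) => ℝ) 0 with hedef
    have hmp : MeasurePreserving e := volume_preserving_piFinSuccAbove (fun _ : Fin (m+1) => ℝ) 0
    set L : (Fin (m+1) → ℝ) →ₗ[ℝ] ℝ × (Fin m → ℝ) :=
      { toFun := fun g => (g 0, fun j => g ((0 : Fin (m+1)).succAbove j))
        map_add' := fun g h => rfl
        map_smul' := fun c g => rfl } with hLdef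
    have hLe : ⇑e = ⇑L := rfl
    have hdiffcp : IsCompact ((2:ℝ)⁻¹ • (A - A)) := by
      have h1 : A - A = A + (-A) := sub_eq_add_neg A A
      exact (h1 ▸ (hcp.add hcp.neg)).smul _
    have hAcomp' : IsCompact (⇑L '' A) := hcp.image L.continuous_of_finiteDimensional
    have hAconv' : Convex ℝ (⇑L '' A) := hco.linear_image L
    have key := key_step IH (⇑L '' A) hAconv' hAcomp'
    have himg2 : ⇑L '' ((2:ℝ)⁻¹ • (A - A)) = (2:ℝ)⁻¹ • (⇑L '' A - ⇑L '' A) := by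
      rw [image_smul_set, Set.image_sub]
    calc volume A = volume (⇑L '' A) := by
          rw [← hLe, vol_img e hmp A hcp.measurableSet.nullMeasurableSet]
      _ ≤ volume ((2:ℝ)⁻¹ • (⇑L '' A - ⇑L '' A)) := key
      _ = volume (⇑L '' ((2:ℝ)⁻¹ • (A - A))) := by rw [himg2]
      _ = volume ((2:ℝ)⁻¹ • (A - A)) := by
          rw [← hLe, vol_img e hmp _ hdiffcp.measurableSet.nullMeasurableSet]

lemma diff_euclidean {n : ℕ} (A : Set (EuclideanSpace ℝ (Fin n))) (hco : Convex ℝ A)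
    (hcp : IsCompact A) : volume A ≤ volume ((2:ℝ)⁻¹ • (A - A)) := by
  set e := (MeasurableEquiv.toLp 2 (Fin n → ℝ)).symm with hedef
  have hmp : MeasurePreserving e := EuclideanSpace.volume_preserving_symm_measurableEquiv_toLp (Fin n)
  set L : EuclideanSpace ℝ (Fin n) →ₗ[ℝ] (Fin n → ℝ) :=
    (WithLp.linearEquiv 2 ℝ (Fin n → ℝ)).toLinearMap with hLdef
  have hLe : ⇑e = ⇑L := rfl
  have hdiffcp : IsCompact ((2:ℝ)⁻¹ • (A - A)) := by
    have h1 : A - A = A + (-A) := sub_eq_add_neg A A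
    exact (h1 ▸ (hcp.add hcp.neg)).smul _
  have hAcomp' : IsCompact (⇑L '' A) := hcp.image L.continuous_of_finiteDimensional
  have hAconv' : Convex ℝ (⇑L '' A) := hco.linear_image L
  have key := diff_pi n (⇑L '' A) hAconv' hAcomp'
  have himg2 : ⇑L '' ((2:ℝ)⁻¹ • (A - A)) = (2:ℝ)⁻¹ • (⇑L '' A - ⇑L '' A) := by
    rw [image_smul_set, Set.image_sub]
  calc volume A = volume (⇑L '' A) := by
        rw [← hLe, vol_img e hmp A hcp.measurableSet.nullMeasurableSet]
    _ ≤ volume ((2:ℝ)⁻¹ • (⇑L '' A - ⇑L '' A)) := key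
    _ = volume (⇑L '' ((2:ℝ)⁻¹ • (A - A))) := by rw [himg2]
    _ = volume ((2:ℝ)⁻¹ • (A - A)) := by
        rw [← hLe, vol_img e hmp _ hdiffcp.measurableSet.nullMeasurableSet]

theorem psi2_decay_of_twoConvex {n : ℕ} (K : Set (EuclideanSpace ℝ (Fin n)))
    (hK : IsSymmConvexBody K) (hvol : volume K = 1)
    (α : ℝ) (hα : 0 < α) (h2 : IsTwoConvex K α)
    (θ : EuclideanSpace ℝ (Fin n)) (hθ : ‖θ‖ = 1)
    (w : ℝ) (hw : IsLUB ((fun x => abs ⟪x, θ⟫) '' K) w)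
    (t : ℝ) (ht : 0 < t) :
    volume {x | x ∈ K ∧ t < ⟪x, θ⟫} ≤
      ENNReal.ofReal (2 * Real.exp (-2 * α * n * (t / w) ^ 2)) := by
  obtain ⟨hKcp, hKco, hKint, hKsymm⟩ := hK
  have hub : ∀ x ∈ K, |⟪x, θ⟫| ≤ w := fun x hx => hw.1 ⟨x, hx, rfl⟩
  -- 0 is interior point
  have h0int : (0 : EuclideanSpace ℝ (Fin n)) ∈ interior K := by
    obtain ⟨z, hz⟩ := hKint
    have hz' : -z ∈ interior K := by
      nth_rewrite 1 [hKsymm]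
      have h1 : interior (-K) = -(interior K) := by
        have h2 := (Homeomorph.neg (EuclideanSpace ℝ (Fin n))).preimage_interior K
        have h3 : ⇑(Homeomorph.neg (EuclideanSpace ℝ (Fin n))) = fun x => -x := rfl
        rw [h3] at h2
        exact h2.symm
      rw [h1, Set.mem_neg, neg_neg]
      exact hz
    have := (hKco.interior) hz hz' (by norm_num : (0:ℝ) ≤ 2⁻¹)
      (by norm_num : (0:ℝ) ≤ 2⁻¹) (by norm_num)
    simpa using this
  have hK0 : (0 : EuclideanSpace ℝ (Fin n)) ∈ K := interior_subset h0int
  have habs : Absorbent ℝ K := absorbent_nhds_zero (mem_interior_iff_mem_nhds.1 h0int)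
  -- w > 0
  have hwpos : 0 < w := by
    obtain ⟨r, hr0, hball⟩ := Metric.mem_nhds_iff.1 (mem_interior_iff_mem_nhds.1 h0int)
    have hmem : (r/2) • θ ∈ K := by
      apply hball
      rw [Metric.mem_ball, dist_zero_right, norm_smul, hθ, mul_one, Real.norm_eq_abs]
      rw [abs_of_nonneg (by linarith)]
      linarith
    have hip : ⟪(r/2) • θ, θ⟫ = r/2 := by
      rw [real_inner_smul_left, real_inner_self_eq_norm_sq, hθ]
      ring
    have := hub _ hmem
    rw [hip] at this
    have : r/2 ≤ w := le_trans (le_abs_self _) this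
    linarith
  -- inner ≤ w * gauge
  have hinner_le : ∀ z, ⟪z, θ⟫ ≤ w * gauge K z := by
    intro z
    by_contra hcon
    push_neg at hcon
    have hgl : gauge K z < ⟪z, θ⟫ / w := (lt_div_iff₀ hwpos).2 (by linarith [hcon])
    obtain ⟨ρ, hρ1, hρ2⟩ := exists_between hgl
    obtain ⟨b, hb0, hbρ, hzb⟩ := exists_lt_of_gauge_lt habs hρ1
    obtain ⟨k, hk, rfl⟩ := hzb
    have h1 : ⟪b • k, θ⟫ = b * ⟪k, θ⟫ := real_inner_smul_left _ _ _
    have h2' : ⟪k, θ⟫ ≤ w := le_trans (le_abs_self _) (hub k hk)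
    have h3 : b * ⟪k, θ⟫ ≤ b * w := by
      apply mul_le_mul_of_nonneg_left h2' hb0.le
    have h4 : b * w < ρ * w := by
      apply mul_lt_mul_of_pos_right hbρ hwpos
    have h5 : ρ * w < ⟪b • k, θ⟫ := by
      rw [← lt_div_iff₀ hwpos]  -- ρ < ⟪⟫/w
      exact hρ2
    rw [h1] at h5
    linarith
  -- gauge ≤ 1 implies membership
  have hmem_of_gauge : ∀ z, gauge K z ≤ 1 → z ∈ K := by
    intro z hz
    have := mem_closure_of_gauge_le_one hKco hK0 habs hz
    rwa [hKcp.isClosed.closure_eq] at this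
  -- main case split
  rcases le_or_gt w t with hwt | htw
  · have hempty : {x | x ∈ K ∧ t < ⟪x, θ⟫} = ∅ := by
      ext x
      simp only [Set.mem_setOf_eq, Set.mem_empty_iff_false, iff_false, not_and, not_lt]
      intro hx
      exact le_trans (le_trans (le_abs_self _) (hub x hx)) hwt
    rw [hempty]
    simp
  · set ε : ℝ := 2 * (t / w) with hεdef
    set c : ℝ := 1 - α * ε ^ 2 with hcdef
    have hε0 : 0 < ε := by positivity
    have hε2 : ε ≤ 2 := by
      rw [hεdef]
      have : t / w ≤ 1 := (div_le_one hwpos).2 htw.le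
      linarith
    set B : Set (EuclideanSpace ℝ (Fin n)) := K ∩ {x | t ≤ ⟪x, θ⟫} with hBdef
    have hlin : IsLinearMap ℝ (fun x : EuclideanSpace ℝ (Fin n) => ⟪x, θ⟫) :=
      ⟨fun x y => inner_add_left x y θ, fun c x => real_inner_smul_left x θ c⟩
    have hBcp : IsCompact B := hKcp.inter_right
      (isClosed_le continuous_const (hlin.mk' _).continuous_of_finiteDimensional)
    have hBco : Convex ℝ B := hKco.inter (convex_halfSpace_ge hlin t)
    -- modulus bound on midpoints
    have hgauge_mid : ∀ x ∈ B, ∀ y ∈ B, gauge K ((2:ℝ)⁻¹ • (x - y)) ≤ c := by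
      intro x hx y hy
      have hxK : x ∈ K := hx.1
      have hyK : y ∈ K := hy.1
      have hnyK : -y ∈ K := by
        rw [hKsymm]
        simpa using hyK
      have hgx : gauge K x ≤ 1 := gauge_le_one_of_mem hxK
      have hgny : gauge K (-y) ≤ 1 := gauge_le_one_of_mem hnyK
      have hsum : ε ≤ gauge K (x - -y) := by
        have h1 : 2 * t ≤ ⟪x + y, θ⟫ := by
          rw [inner_add_left]
          have := hx.2; have := hy.2
          simp only [Set.mem_setOf_eq] at *
          linarith
        have h2' := hinner_le (x + y)
        have h3 : 2 * t ≤ w * gauge K (x + y) := le_trans h1 h2'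
        have h4 : ε ≤ gauge K (x + y) := by
          rw [hεdef]
          rw [mul_div_assoc'] ; rw [div_le_iff₀ hwpos]
          linarith [h3]
        rwa [sub_neg_eq_add]
      have hmemS : (1 - gauge K ((2:ℝ)⁻¹ • (x - y))) ∈
          { d | ∃ a b : EuclideanSpace ℝ (Fin n), gauge K a ≤ 1 ∧ gauge K b ≤ 1 ∧
            ε ≤ gauge K (a - b) ∧ d = 1 - gauge K ((2:ℝ)⁻¹ • (a + b)) } := by
        refine ⟨x, -y, hgx, hgny, hsum, ?_⟩
        rw [← sub_eq_add_neg]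
      have hbdd : BddBelow { d | ∃ a b : EuclideanSpace ℝ (Fin n), gauge K a ≤ 1 ∧
          gauge K b ≤ 1 ∧ ε ≤ gauge K (a - b) ∧ d = 1 - gauge K ((2:ℝ)⁻¹ • (a + b)) } := by
        refine ⟨0, ?_⟩
        rintro d ⟨a, b, hga, hgb, -, rfl⟩
        have h1 : gauge K ((2:ℝ)⁻¹ • (a + b)) = 2⁻¹ * gauge K (a + b) :=
          gauge_smul_of_nonneg (by norm_num) _
        have h2' : gauge K (a + b) ≤ gauge K a + gauge K b := gauge_add_le hKco habs _ _
        show (0:ℝ) ≤ 1 - gauge K ((2:ℝ)⁻¹ • (a + b))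
        rw [h1]
        linarith
      have hmono := csInf_le hbdd hmemS
      have halpha := h2 ε hε0 hε2
      have : α * ε ^ 2 ≤ 1 - gauge K ((2:ℝ)⁻¹ • (x - y)) :=
        le_trans halpha hmono
      rw [hcdef]
      linarith
    -- the half-difference body is inside {gauge ≤ c}
    have hMsub : (2:ℝ)⁻¹ • (B - B) ⊆ {z | gauge K z ≤ c} := by
      rintro z ⟨v, ⟨x, hx, y, hy, rfl⟩, rfl⟩
      exact hgauge_mid x hx y hy
    have hsubB : {x | x ∈ K ∧ t < ⟪x, θ⟫} ⊆ B := fun x hx => ⟨hx.1, hx.2.le⟩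
    rcases B.eq_empty_or_nonempty with hBe | hBne
    · have : volume {x | x ∈ K ∧ t < ⟪x, θ⟫} = 0 := by
        apply measure_mono_null hsubB
        rw [hBe]; simp
      rw [this]
      simp
    · -- c is nonnegative
      have hc0 : 0 ≤ c := by
        obtain ⟨x, hx⟩ := hBne
        have := hgauge_mid x hx x hx
        rw [sub_self, smul_zero, gauge_zero] at this
        linarith
      -- {gauge ≤ c} ⊆ c' • K for any c' > c
      have hsmul : ∀ c' : ℝ, c < c' → {z | gauge K z ≤ c} ⊆ c' • K := by
        intro c' hcc' z hz
        have hgz : gauge K z < c' := lt_of_le_of_lt hz hcc'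
        obtain ⟨b, hb0, hbc', hzb⟩ := exists_lt_of_gauge_lt habs hgz
        obtain ⟨k, hk, rfl⟩ := hzb
        have hc'0 : 0 < c' := lt_of_le_of_lt hc0 hcc'
        refine ⟨(b / c') • k, ?_, ?_⟩
        · apply hKco.smul_mem_of_zero_mem hK0 hk
          constructor
          · positivity
          · rw [div_le_one hc'0]; exact hbc'.le
        · show c' • ((b / c') • k) = b • k
          rw [smul_smul]
          congr 1
          field_simp
      -- volume chain
      have hchain : ∀ c' : ℝ, c < c' →
          volume {x | x ∈ K ∧ t < ⟪x, θ⟫} ≤ ENNReal.ofReal (c' ^ n) := by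
        intro c' hcc'
        have hc'0 : 0 < c' := lt_of_le_of_lt hc0 hcc'
        calc volume {x | x ∈ K ∧ t < ⟪x, θ⟫} ≤ volume B := measure_mono hsubB
          _ ≤ volume ((2:ℝ)⁻¹ • (B - B)) := diff_euclidean B hBco hBcp
          _ ≤ volume (c' • K) := measure_mono (le_trans hMsub (hsmul c' hcc'))
          _ = ENNReal.ofReal (c' ^ n) := by
              rw [Measure.addHaar_smul, hvol, mul_one, finrank_euclideanSpace_fin,
                abs_of_nonneg (pow_nonneg hc'0.le n)]
      have hlim : volume {x | x ∈ K ∧ t < ⟪x, θ⟫} ≤ ENNReal.ofReal (c ^ n) := by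
        have htend : Filter.Tendsto (fun k : ℕ => ENNReal.ofReal ((c + 1/(k+1)) ^ n))
            Filter.atTop (nhds (ENNReal.ofReal (c ^ n))) := by
          apply ENNReal.tendsto_ofReal
          have h1 : Filter.Tendsto (fun k : ℕ => c + 1/(k+1)) Filter.atTop (nhds c) := by
            have h0 := tendsto_one_div_add_atTop_nhds_zero_nat (𝕜 := ℝ)
            have := Filter.Tendsto.add (tendsto_const_nhds (x := c)) h0
            simpa using this
          exact h1.pow n
        apply ge_of_tendsto' htend
        intro k
        apply hchain
        have : (0:ℝ) < 1/(k+1) := by positivity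
        linarith
      refine le_trans hlim (ENNReal.ofReal_le_ofReal ?_)
      -- real inequality : c^n ≤ 2 exp(...)
      have hc1 : c ≤ Real.exp (-(α * ε ^ 2)) := by
        have := Real.add_one_le_exp (-(α * ε ^ 2))
        rw [hcdef]
        linarith
      have hcn : c ^ n ≤ Real.exp (-(α * ε ^ 2)) ^ n := pow_le_pow_left₀ hc0 hc1 n
      have hexpn : Real.exp (-(α * ε ^ 2)) ^ n = Real.exp (n * (-(α * ε ^ 2))) := by
        rw [← Real.exp_nat_mul]
      have hε4 : ε ^ 2 = 4 * (t/w) ^ 2 := by rw [hεdef]; ring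
      have hge : (n : ℝ) * (-(α * ε ^ 2)) ≤ -2 * α * n * (t/w) ^ 2 := by
        rw [hε4]
        have h4 : 0 ≤ α * (t/w)^2 * n := by positivity
        nlinarith
      calc c ^ n ≤ Real.exp ((n:ℝ) * (-(α * ε ^ 2))) := by rw [← hexpn]; exact hcn
        _ ≤ Real.exp (-2 * α * n * (t/w) ^ 2) := Real.exp_le_exp.2 hge
        _ ≤ 2 * Real.exp (-2 * α * n * (t/w) ^ 2) := by
            nlinarith [Real.exp_pos (-2 * α * n * (t/w) ^ 2)]
end
end

section
/- Let K, T ⊂ ℝⁿ be centrally symmetric convex bodies which are 2-convex with constants γ_K > 0 and γ_T > 0 respectively. Define their 2-Firey intersection K ∩₂ T = {x ∈ ℝⁿ : ‖x‖_K² + ‖x‖_T² ≤ 1}. Then K ∩₂ T is a centrally symmetric convex body which is 2-convex with constant min(γ_K, γ_T)/8. -/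
open MeasureTheory
open scoped RealInnerProductSpace

noncomputable section

/-- The 2-Firey intersection `K ∩₂ T = {x : ‖x‖_K² + ‖x‖_T² ≤ 1}`. -/
def fireyIntersection {E : Type*} [AddCommGroup E] [Module ℝ E]
    (K T : Set E) : Set E :=
  { x | gauge K x ^ 2 + gauge T x ^ 2 ≤ 1 }

lemma algH (a b y : ℝ) (hb : 0 < b) (hba : b ≤ a) (hy0 : 0 ≤ y) (hy2 : y ≤ 2*b) :
    0 ≤ 4*a^4*(a-b)^2 + 4*a^2*b*(a+b)*y^2 - a^4*((a-b)+y)^2 - b^2*y^4 := by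
  have ha : 0 < a := lt_of_lt_of_le hb hba
  have hy2a : y ≤ 2*a := by linarith
  have e2 : b^2*y^4 ≤ 4*a^2*b^2*y^2 := by
    nlinarith [mul_nonneg (mul_nonneg (sq_nonneg b) (sq_nonneg y))
      (mul_nonneg (by linarith : (0:ℝ) ≤ 2*a-y) (by linarith : (0:ℝ) ≤ 2*a+y))]
  have e3 : 4*a^2*b^2*y^2 ≤ 4*a^2*b*(a+b)*y^2 := by
    nlinarith [mul_nonneg (mul_nonneg (pow_nonneg ha.le 3) hb.le) (sq_nonneg y)]
  rcases le_total y (a-b) with h | h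
  · have e1 : 0 ≤ a^4*((a-b)-y)*(3*(a-b)+y) := by
      apply mul_nonneg (mul_nonneg (by positivity) (by linarith)) (by linarith)
    nlinarith [e1, e2, e3]
  · have hab : a ≤ b + y := by linarith
    have key : a*((y-(a-b))*(3*(a-b)+y)) ≤ 4*b*y^2 := by
      nlinarith [sq_nonneg (y - 3*(a-b)),
        mul_nonneg (sub_nonneg.2 h) (by linarith : (0:ℝ) ≤ 3*(a-b)+y), sq_nonneg y]
    have key2 := mul_le_mul_of_nonneg_left key (by positivity : (0:ℝ) ≤ a^3)
    nlinarith [key2, e2, e3]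

/-- Core: from the midpoint bound derive the squared inequality. -/
lemma gauge_core (a b t x γ M : ℝ) (hb : 0 < b) (hba : b ≤ a)
    (hst : a - b ≤ t) (htab : t ≤ a + b) (hx : t - (a-b) ≤ x)
    (hγ : 0 < γ) (hγ4 : γ ≤ 1/4) (hM : 0 ≤ M)
    (hbound : a^2*M ≤ a^2*(a+b)/2 - γ*b*x^2) :
    M^2 ≤ (a^2+b^2)/2 - γ/4*t^2 := by
  have ha : 0 < a := lt_of_lt_of_le hb hba
  obtain ⟨y, hy⟩ : ∃ y : ℝ, y = t - (a-b) := ⟨_, rfl⟩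
  have hy0 : 0 ≤ y := by rw [hy]; linarith
  have hy2 : y ≤ 2*b := by rw [hy]; linarith
  have hxy : γ*b*y^2 ≤ γ*b*x^2 := by
    have h' : y ≤ x := by rw [hy]; exact hx
    nlinarith [mul_nonneg (mul_nonneg (mul_nonneg hγ.le hb.le) (sub_nonneg.2 h'))
      (by linarith : (0:ℝ) ≤ x + y)]
  have hbound' : a^2*M ≤ a^2*(a+b)/2 - γ*b*y^2 := by linarith
  have hH := algH a b y hb hba hy0 hy2
  have hMnn : 0 ≤ a^2*M := by positivity
  have h1 : (a^2*M)^2 ≤ (a^2*(a+b)/2 - γ*b*y^2)^2 :=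
    sq_le_sq' (by linarith) hbound'
  have ht : t = (a-b) + y := by rw [hy]; ring
  have h2 : (a^2*(a+b)/2 - γ*b*y^2)^2 ≤ a^4*((a^2+b^2)/2 - γ/4*((a-b)+y)^2) := by
    nlinarith [mul_nonneg (mul_nonneg hγ.le (by linarith : (0:ℝ) ≤ 1/4 - γ))
        (mul_nonneg (sq_nonneg b) (sq_nonneg (y^2))),
      mul_nonneg (by linarith : (0:ℝ) ≤ 1 - 4*γ)
        (mul_nonneg (pow_nonneg ha.le 4) (sq_nonneg (a-b))),
      mul_nonneg hγ.le hH]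
  rw [ht]
  have h3 : a^4*M^2 ≤ a^4*((a^2+b^2)/2 - γ/4*((a-b)+y)^2) := by nlinarith [h1, h2]
  have ha4 : 0 < a^4 := by positivity
  exact le_of_mul_le_mul_left (by linarith) ha4



open Metric Set Pointwise

variable {n : ℕ} {K : Set (EuclideanSpace ℝ (Fin n))}
local notation "E" => EuclideanSpace ℝ (Fin n)

lemma aux_symm (hK : IsSymmConvexBody K) : ∀ x ∈ K, -x ∈ K := by
  intro x hx
  rw [hK.2.2.2] at hx
  exact Set.mem_neg.mp hx

lemma aux_zero_mem_interior (hK : IsSymmConvexBody K) : (0:E) ∈ interior K := by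
  obtain ⟨z, hz⟩ := hK.2.2.1
  have hzK : -z ∈ K := aux_symm hK z (interior_subset hz)
  have := hK.2.1.combo_interior_self_mem_interior hz hzK
    (by norm_num : (0:ℝ) < 1/2) (by norm_num : (0:ℝ) ≤ 1/2) (by norm_num)
  simpa [smul_neg] using this

lemma aux_nhds (hK : IsSymmConvexBody K) : K ∈ nhds (0:E) :=
  mem_interior_iff_mem_nhds.mp (aux_zero_mem_interior hK)

lemma aux_absorbent (hK : IsSymmConvexBody K) : Absorbent ℝ K :=
  absorbent_nhds_zero (aux_nhds hK)

lemma aux_bounded (hK : IsSymmConvexBody K) : Bornology.IsVonNBounded ℝ K :=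
  (NormedSpace.isVonNBounded_iff ℝ).mpr hK.1.isBounded

lemma aux_gauge_pos (hK : IsSymmConvexBody K) {x : E} (hx : x ≠ 0) : 0 < gauge K x :=
  (gauge_pos (aux_absorbent hK) (aux_bounded hK)).mpr hx

lemma aux_gauge_eq_zero (hK : IsSymmConvexBody K) {x : E} (h : gauge K x = 0) : x = 0 :=
  (gauge_eq_zero (aux_absorbent hK) (aux_bounded hK)).mp h

lemma aux_gauge_add (hK : IsSymmConvexBody K) (x y : E) :
    gauge K (x + y) ≤ gauge K x + gauge K y :=
  gauge_add_le hK.2.1 (aux_absorbent hK) x y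

lemma aux_gauge_neg (hK : IsSymmConvexBody K) (x : E) : gauge K (-x) = gauge K x :=
  gauge_neg (aux_symm hK) x

lemma aux_gauge_smul (hK : IsSymmConvexBody K) {c : ℝ} (hc : 0 ≤ c) (x : E) :
    gauge K (c • x) = c * gauge K x :=
  gauge_smul_of_nonneg hc x

lemma aux_mem_of_gauge_le_one (hK : IsSymmConvexBody K) {x : E} (h : gauge K x ≤ 1) : x ∈ K := by
  have := (gauge_le_one_iff_mem_closure hK.2.1 (aux_nhds hK)).mp h
  rwa [hK.1.isClosed.closure_eq] at this

lemma aux_S_nonneg (hK : IsSymmConvexBody K) (ε : ℝ) :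
    ∀ d ∈ { d | ∃ x y : E, gauge K x ≤ 1 ∧ gauge K y ≤ 1 ∧ ε ≤ gauge K (x - y) ∧
      d = 1 - gauge K ((2:ℝ)⁻¹ • (x + y)) }, 0 ≤ d := by
  rintro d ⟨x, y, hx, hy, -, rfl⟩
  have h1 : gauge K ((2:ℝ)⁻¹ • (x + y)) ≤ 2⁻¹ * (gauge K x + gauge K y) := by
    rw [aux_gauge_smul hK (by norm_num)]
    have := aux_gauge_add hK x y
    nlinarith
  nlinarith

lemma aux_S_bddBelow (hK : IsSymmConvexBody K) (ε : ℝ) :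
    BddBelow { d | ∃ x y : E, gauge K x ≤ 1 ∧ gauge K y ≤ 1 ∧ ε ≤ gauge K (x - y) ∧
      d = 1 - gauge K ((2:ℝ)⁻¹ • (x + y)) } :=
  ⟨0, fun d hd => aux_S_nonneg hK ε d hd⟩

lemma aux_huc (hK : IsSymmConvexBody K) {γ : ℝ} (h2 : IsTwoConvex K γ)
    (u v : E) (R : ℝ) (hR : 0 < R) (hu : gauge K u ≤ R) (hv : gauge K v ≤ R)
    (ht0 : 0 < gauge K (u - v)) (ht2 : gauge K (u - v) ≤ 2*R) :
    gauge K ((2:ℝ)⁻¹ • (u + v)) * R ≤ R^2 - γ * gauge K (u - v)^2 := by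
  have hRinv : (0:ℝ) ≤ R⁻¹ := by positivity
  set x : E := R⁻¹ • u with hxdef
  set y : E := R⁻¹ • v with hydef
  have hgx : gauge K x ≤ 1 := by
    rw [hxdef, aux_gauge_smul hK hRinv]
    calc R⁻¹ * gauge K u ≤ R⁻¹ * R := by
          exact mul_le_mul_of_nonneg_left hu hRinv
      _ = 1 := by field_simp
  have hgy : gauge K y ≤ 1 := by
    rw [hydef, aux_gauge_smul hK hRinv]
    calc R⁻¹ * gauge K v ≤ R⁻¹ * R := mul_le_mul_of_nonneg_left hv hRinv
      _ = 1 := by field_simp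
  have hxy : x - y = R⁻¹ • (u - v) := by rw [hxdef, hydef, smul_sub]
  have hgxy : gauge K (x - y) = R⁻¹ * gauge K (u - v) := by
    rw [hxy, aux_gauge_smul hK hRinv]
  set ε : ℝ := R⁻¹ * gauge K (u - v) with hεdef
  have hε0 : 0 < ε := by positivity
  have hε2 : ε ≤ 2 := by
    rw [hεdef, inv_mul_le_iff₀ hR]
    linarith [ht2]
  have hmid : (2:ℝ)⁻¹ • (x + y) = R⁻¹ • ((2:ℝ)⁻¹ • (u + v)) := by
    rw [hxdef, hydef, ← smul_add, smul_comm]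
  have hmem : (1 - gauge K ((2:ℝ)⁻¹ • (x + y))) ∈
      { d | ∃ x y : E, gauge K x ≤ 1 ∧ gauge K y ≤ 1 ∧ ε ≤ gauge K (x - y) ∧
        d = 1 - gauge K ((2:ℝ)⁻¹ • (x + y)) } :=
    ⟨x, y, hgx, hgy, le_of_eq hgxy.symm, rfl⟩
  have hle := csInf_le (aux_S_bddBelow hK ε) hmem
  have h2' := h2 ε hε0 hε2
  have hkey : γ * ε^2 ≤ 1 - R⁻¹ * gauge K ((2:ℝ)⁻¹ • (u + v)) := by
    rw [← aux_gauge_smul hK hRinv, ← hmid]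
    exact le_trans h2' (le_trans hle (le_refl _))
  rw [hεdef] at hkey
  have hR2 : (0:ℝ) < R^2 := by positivity
  have := mul_le_mul_of_nonneg_left hkey hR2.le
  have hRR : R^2 * (R⁻¹ * gauge K ((2:ℝ)⁻¹ • (u + v))) = gauge K ((2:ℝ)⁻¹ • (u + v)) * R := by
    field_simp
  have hRe : R^2 * (γ * (R⁻¹ * gauge K (u - v))^2) = γ * gauge K (u - v)^2 := by
    field_simp
  nlinarith [this]

lemma aux_quarter (hn : n ≠ 0) (hK : IsSymmConvexBody K) {γ : ℝ}
    (h2 : IsTwoConvex K γ) : γ ≤ 1/4 := by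
  have hn' : 0 < n := Nat.pos_of_ne_zero hn
  set e : E := EuclideanSpace.single (⟨0, hn'⟩ : Fin n) (1:ℝ) with hedef
  have he : e ≠ 0 := by
    have h1 : e ⟨0, hn'⟩ = 1 := by simp [hedef]
    intro h
    rw [h] at h1
    simp at h1
  have hge : 0 < gauge K e := aux_gauge_pos hK he
  set x : E := (gauge K e)⁻¹ • e with hxdef
  have hgx : gauge K x = 1 := by
    rw [hxdef, aux_gauge_smul hK (by positivity)]
    field_simp
  have hgnx : gauge K (-x) = 1 := by rw [aux_gauge_neg hK]; exact hgx
  have hsub : gauge K (x - -x) = 2 := by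
    have : x - -x = (2:ℝ) • x := by module
    rw [this, aux_gauge_smul hK (by norm_num), hgx]; norm_num
  have hmid : gauge K ((2:ℝ)⁻¹ • (x + -x)) = 0 := by
    simp [gauge_zero]
  have hmem : (1:ℝ) ∈ { d | ∃ x y : E, gauge K x ≤ 1 ∧ gauge K y ≤ 1 ∧ (2:ℝ) ≤ gauge K (x - y) ∧
      d = 1 - gauge K ((2:ℝ)⁻¹ • (x + y)) } :=
    ⟨x, -x, le_of_eq hgx, le_of_eq hgnx, le_of_eq hsub.symm, by rw [hmid]; norm_num⟩
  have hle := csInf_le (aux_S_bddBelow hK 2) hmem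
  have h2' := h2 2 (by norm_num) (le_refl 2)
  have : γ * 2^2 ≤ 1 := le_trans h2' hle
  linarith

set_option maxHeartbeats 1000000 in
lemma lemA' (hK : IsSymmConvexBody K) {γ : ℝ} (hγ : 0 < γ) (hγ4 : γ ≤ 1/4)
    (h2 : IsTwoConvex K γ) (u v : E) (hba' : gauge K v ≤ gauge K u) :
    gauge K ((2:ℝ)⁻¹ • (u + v))^2 ≤
      (gauge K u^2 + gauge K v^2)/2 - γ/4 * gauge K (u - v)^2 := by
  obtain ⟨a, hadef⟩ : ∃ x : ℝ, x = gauge K u := ⟨_, rfl⟩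
  obtain ⟨b, hbdef⟩ : ∃ x : ℝ, x = gauge K v := ⟨_, rfl⟩
  obtain ⟨M, hMdef⟩ : ∃ x : ℝ, x = gauge K ((2:ℝ)⁻¹ • (u + v)) := ⟨_, rfl⟩
  obtain ⟨t, htdef⟩ : ∃ x : ℝ, x = gauge K (u - v) := ⟨_, rfl⟩
  rw [← hadef, ← hbdef, ← hMdef, ← htdef]
  have hba : b ≤ a := by rw [hadef, hbdef]; exact hba'
  have ha0 : 0 ≤ a := hadef ▸ gauge_nonneg u
  have hb0 : 0 ≤ b := hbdef ▸ gauge_nonneg v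
  have hM0 : 0 ≤ M := hMdef ▸ gauge_nonneg _
  have ht0 : 0 ≤ t := htdef ▸ gauge_nonneg _
  have hM2 : M ≤ (a + b)/2 := by
    rw [hMdef, aux_gauge_smul hK (by norm_num)]
    have := aux_gauge_add hK u v
    rw [← hadef, ← hbdef] at this
    nlinarith
  have hts : a - b ≤ t := by
    have h1 : (u - v) + v = u := by module
    have h2' := aux_gauge_add hK (u - v) v
    rw [h1, ← hadef, ← htdef, ← hbdef] at h2'
    linarith
  have htab : t ≤ a + b := by
    have h1 : u + (-v) = u - v := by module
    have h2' := aux_gauge_add hK u (-v)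
    rw [aux_gauge_neg hK, h1, ← hadef, ← htdef, ← hbdef] at h2'
    exact h2'
  rcases eq_or_lt_of_le ht0 with hteq | htpos
  · rw [← hteq]
    nlinarith [hM2, hM0, sq_nonneg (a - b)]
  · have hapos : 0 < a := by linarith
    rcases eq_or_lt_of_le hb0 with hbeq | hbpos
    · -- b = 0, so v = 0
      have hv : v = 0 := aux_gauge_eq_zero hK (by rw [← hbdef, ← hbeq])
      have htva : t = a := by rw [htdef, hadef, hv, sub_zero]
      have hMa : M = a/2 := by
        rw [hMdef, hv, add_zero, aux_gauge_smul hK (by norm_num), ← hadef]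
        ring
      rw [htva, hMa, ← hbeq]
      nlinarith [sq_nonneg a, hapos, mul_pos hapos hapos]
    · -- main case : 0 < b ≤ a
      obtain ⟨w, hwdef⟩ : ∃ x : E, x = (a/b) • v := ⟨_, rfl⟩
      have hab0 : 0 ≤ a/b := by positivity
      have hgw : gauge K w = a := by
        rw [hwdef, aux_gauge_smul hK hab0, ← hbdef]
        field_simp
      obtain ⟨t', ht'def⟩ : ∃ x : ℝ, x = gauge K (u - w) := ⟨_, rfl⟩
      have ht'0 : 0 ≤ t' := ht'def ▸ gauge_nonneg _
      have hwv : gauge K (w - v) = a - b := by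
        have h1 : w - v = (a/b - 1) • v := by rw [hwdef]; module
        rw [h1, aux_gauge_smul hK (by
          have : (1:ℝ) ≤ a/b := (one_le_div hbpos).mpr hba
          linarith), ← hbdef]
        field_simp
      have ht's : t - (a - b) ≤ t' := by
        have h1 : u - v = (u - w) + (w - v) := by module
        have h2' := aux_gauge_add hK (u - w) (w - v)
        rw [← h1, ← htdef, ← ht'def, hwv] at h2'
        linarith
      have ht'2 : t' ≤ 2*a := by
        have h1 : u + (-w) = u - w := by module
        have h2' := aux_gauge_add hK u (-w)
        rw [aux_gauge_neg hK, h1, hgw, ← hadef, ← ht'def] at h2'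
        linarith
      rcases eq_or_lt_of_le ht'0 with ht'eq | ht'pos
      · -- t' = 0 hence t = a - b
        have hta : t = a - b := le_antisymm (by linarith) hts
        rw [hta]
        nlinarith [hM2, hM0, mul_nonneg (by linarith : (0:ℝ) ≤ 1 - γ) (sq_nonneg (a - b))]
      · -- apply uniform convexity to u, w at scale a
        have hp := aux_huc hK h2 u w a hapos (le_of_eq hadef.symm) (le_of_eq hgw)
          (by rw [← ht'def]; exact ht'pos) (by rw [← ht'def]; exact ht'2)
        rw [← ht'def] at hp
        obtain ⟨gp, hgpdef⟩ : ∃ x : ℝ, x = gauge K ((2:ℝ)⁻¹ • (u + w)) := ⟨_, rfl⟩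
        rw [← hgpdef] at hp
        have hgp0 : 0 ≤ gp := hgpdef ▸ gauge_nonneg _
        have hdec : (2:ℝ)⁻¹ • (u + v) = (b/a) • ((2:ℝ)⁻¹ • (u + w)) + ((a-b)/(2*a)) • u := by
          rw [hwdef]
          match_scalars
          · field_simp
            ring
          · field_simp
        have h5 : M ≤ (b/a) * gp + ((a-b)/(2*a)) * a := by
          rw [hMdef, hdec]
          calc gauge K ((b/a) • ((2:ℝ)⁻¹ • (u + w)) + ((a-b)/(2*a)) • u)
              ≤ gauge K ((b/a) • ((2:ℝ)⁻¹ • (u + w))) + gauge K (((a-b)/(2*a)) • u) :=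
                aux_gauge_add hK _ _
            _ = (b/a) * gp + ((a-b)/(2*a)) * a := by
                rw [aux_gauge_smul hK (c := b/a) (by positivity), ← hgpdef,
                  aux_gauge_smul hK (c := (a-b)/(2*a))
                    (div_nonneg (by linarith) (by linarith)), ← hadef]
        have h7 := mul_le_mul_of_nonneg_left h5 (sq_nonneg a)
        have h8 : a^2 * ((b/a) * gp + ((a-b)/(2*a)) * a) = a*b*gp + a^2*(a-b)/2 := by
          field_simp
        rw [h8] at h7
        have h9 : b * (gp * a) ≤ b * (a^2 - γ*t'^2) := mul_le_mul_of_nonneg_left hp hbpos.le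
        have hbound : a^2*M ≤ a^2*(a+b)/2 - γ*b*t'^2 := by nlinarith [h7, h9]
        exact gauge_core a b t t' γ M hbpos hba hts htab ht's hγ hγ4 hM0 hbound

lemma lemA (hK : IsSymmConvexBody K) {γ : ℝ} (hγ : 0 < γ) (hγ4 : γ ≤ 1/4)
    (h2 : IsTwoConvex K γ) (u v : E) :
    gauge K ((2:ℝ)⁻¹ • (u + v))^2 ≤
      (gauge K u^2 + gauge K v^2)/2 - γ/4 * gauge K (u - v)^2 := by
  rcases le_total (gauge K v) (gauge K u) with h | h
  · exact lemA' hK hγ hγ4 h2 u v h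
  · have := lemA' hK hγ hγ4 h2 v u h
    rw [add_comm v u] at this
    have hsw : gauge K (v - u) = gauge K (u - v) := by
      rw [← aux_gauge_neg hK (u - v), neg_sub]
    rw [hsw] at this
    linarith

variable {T : Set (EuclideanSpace ℝ (Fin n))}

lemma aux_gauge_le_one_of_firey (hK : IsSymmConvexBody K) {x : E}
    (hx : x ∈ fireyIntersection K T) : gauge K x ≤ 1 := by
  have h1 : gauge K x ^ 2 + gauge T x ^ 2 ≤ 1 := hx
  nlinarith [gauge_nonneg (s := K) x, gauge_nonneg (s := T) x, sq_nonneg (gauge T x)]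

lemma aux_firey_subset (hK : IsSymmConvexBody K) (hT : IsSymmConvexBody T) :
    fireyIntersection K T ⊆ K := fun _ hx =>
  aux_mem_of_gauge_le_one hK (aux_gauge_le_one_of_firey hK hx)

lemma aux_firey_closed (hK : IsSymmConvexBody K) (hT : IsSymmConvexBody T) :
    IsClosed (fireyIntersection K T) := by
  have hcont : Continuous (fun x : E => gauge K x ^ 2 + gauge T x ^ 2) :=
    ((continuous_gauge hK.2.1 (aux_nhds hK)).pow 2).add
      ((continuous_gauge hT.2.1 (aux_nhds hT)).pow 2)
  exact isClosed_le hcont continuous_const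

lemma aux_firey_convex (hK : IsSymmConvexBody K) (hT : IsSymmConvexBody T) :
    Convex ℝ (fireyIntersection K T) := by
  intro x hx y hy p q hp hq hpq
  have hxm : gauge K x ^ 2 + gauge T x ^ 2 ≤ 1 := hx
  have hym : gauge K y ^ 2 + gauge T y ^ 2 ≤ 1 := hy
  have key : ∀ S : Set E, IsSymmConvexBody S →
      gauge S (p • x + q • y)^2 ≤ p * gauge S x ^ 2 + q * gauge S y ^ 2 := by
    intro S hS
    have c1 : gauge S (p • x + q • y) ≤ p * gauge S x + q * gauge S y := by
      refine le_trans (aux_gauge_add hS _ _) ?_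
      rw [aux_gauge_smul hS hp, aux_gauge_smul hS hq]
    have csq : gauge S (p • x + q • y)^2 ≤ (p * gauge S x + q * gauge S y)^2 :=
      pow_le_pow_left₀ (gauge_nonneg _) c1 2
    nlinarith [csq, mul_nonneg (mul_nonneg hp hq) (sq_nonneg (gauge S x - gauge S y)),
      sq_nonneg (gauge S x), sq_nonneg (gauge S y)]
  have kK := key K hK
  have kT := key T hT
  show gauge K (p • x + q • y)^2 + gauge T (p • x + q • y)^2 ≤ 1
  nlinarith [kK, kT]

lemma aux_firey_symm (hK : IsSymmConvexBody K) (hT : IsSymmConvexBody T) :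
    fireyIntersection K T = -fireyIntersection K T := by
  ext z
  simp only [fireyIntersection, Set.mem_neg, Set.mem_setOf_eq,
    aux_gauge_neg hK, aux_gauge_neg hT]

lemma aux_firey_interior (hK : IsSymmConvexBody K) (hT : IsSymmConvexBody T) :
    (0:E) ∈ interior (fireyIntersection K T) := by
  obtain ⟨rK, hrK, hballK⟩ := Metric.mem_nhds_iff.mp (aux_nhds hK)
  obtain ⟨rT, hrT, hballT⟩ := Metric.mem_nhds_iff.mp (aux_nhds hT)
  have hgK : ∀ x : E, gauge K x ≤ ‖x‖ / rK := by
    intro x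
    have := gauge_mono (absorbent_nhds_zero
      (Metric.ball_mem_nhds (0:E) hrK)) hballK x
    rwa [gauge_ball hrK.le] at this
  have hgT : ∀ x : E, gauge T x ≤ ‖x‖ / rT := by
    intro x
    have := gauge_mono (absorbent_nhds_zero
      (Metric.ball_mem_nhds (0:E) hrT)) hballT x
    rwa [gauge_ball hrT.le] at this
  obtain ⟨δ, hδdef⟩ : ∃ x : ℝ, x = min rK rT / 2 := ⟨_, rfl⟩
  have hδ : 0 < δ := by rw [hδdef]; positivity
  have hsub : Metric.ball (0:E) δ ⊆ fireyIntersection K T := by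
    intro x hx
    rw [mem_ball_zero_iff] at hx
    have h1 : gauge K x ≤ 1/2 := by
      refine le_trans (hgK x) ?_
      rw [div_le_iff₀ hrK]
      have : δ ≤ rK/2 := by rw [hδdef]; have := min_le_left rK rT; linarith
      linarith
    have h2 : gauge T x ≤ 1/2 := by
      refine le_trans (hgT x) ?_
      rw [div_le_iff₀ hrT]
      have : δ ≤ rT/2 := by rw [hδdef]; have := min_le_right rK rT; linarith
      linarith
    show gauge K x ^ 2 + gauge T x ^ 2 ≤ 1
    nlinarith [gauge_nonneg (s := K) x, gauge_nonneg (s := T) x]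
  exact mem_interior_iff_mem_nhds.mpr
    (Filter.mem_of_superset (Metric.ball_mem_nhds 0 hδ) hsub)

lemma aux_firey_body (hK : IsSymmConvexBody K) (hT : IsSymmConvexBody T) :
    IsSymmConvexBody (fireyIntersection K T) :=
  ⟨hK.1.of_isClosed_subset (aux_firey_closed hK hT) (aux_firey_subset hK hT),
   aux_firey_convex hK hT, ⟨0, aux_firey_interior hK hT⟩, aux_firey_symm hK hT⟩

lemma aux_gauge_firey (hK : IsSymmConvexBody K) (hT : IsSymmConvexBody T) (x : E) :
    gauge (fireyIntersection K T) x = Real.sqrt (gauge K x ^ 2 + gauge T x ^ 2) := by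
  have hsum0 : 0 ≤ gauge K x ^ 2 + gauge T x ^ 2 := by positivity
  rcases eq_or_ne x 0 with rfl | hx
  · simp [gauge_zero]
  · obtain ⟨N, hNdef⟩ : ∃ r : ℝ, r = Real.sqrt (gauge K x ^ 2 + gauge T x ^ 2) := ⟨_, rfl⟩
    rw [← hNdef]
    have hNsq : N^2 = gauge K x ^ 2 + gauge T x ^ 2 := by
      rw [hNdef]; exact Real.sq_sqrt hsum0
    have hN : 0 < N := by
      rw [hNdef]
      apply Real.sqrt_pos.mpr
      have := aux_gauge_pos hK hx
      nlinarith [gauge_nonneg (s := T) x]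
    apply le_antisymm
    · -- gauge F x ≤ N
      apply gauge_le_of_mem hN.le
      rw [Set.mem_smul_set_iff_inv_smul_mem₀ hN.ne']
      show gauge K (N⁻¹ • x) ^ 2 + gauge T (N⁻¹ • x) ^ 2 ≤ 1
      rw [aux_gauge_smul hK (by positivity), aux_gauge_smul hT (by positivity)]
      have heq : (N⁻¹ * gauge K x)^2 + (N⁻¹ * gauge T x)^2
          = (N^2)⁻¹ * (gauge K x^2 + gauge T x^2) := by ring
      rw [heq, ← hNsq, inv_mul_cancel₀ (by positivity)]
    · -- N ≤ gauge F x
      show N ≤ sInf { r : ℝ | 0 < r ∧ x ∈ r • fireyIntersection K T }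
      apply le_csInf (Absorbent.gauge_set_nonempty
        (aux_absorbent (aux_firey_body hK hT)))
      rintro r ⟨hr, z, hz, rfl⟩
      have hzm : gauge K z ^ 2 + gauge T z ^ 2 ≤ 1 := hz
      have h1 : gauge K (r • z) = r * gauge K z := aux_gauge_smul hK hr.le z
      have h2 : gauge T (r • z) = r * gauge T z := aux_gauge_smul hT hr.le z
      rw [hNdef, h1, h2]
      have : (r * gauge K z)^2 + (r * gauge T z)^2 ≤ r^2 := by nlinarith [sq_nonneg r]
      calc Real.sqrt ((r * gauge K z)^2 + (r * gauge T z)^2) ≤ Real.sqrt (r^2) :=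
            Real.sqrt_le_sqrt this
        _ = r := by rw [Real.sqrt_sq hr.le]

lemma aux_S_nonempty (hn : n ≠ 0) (hB : IsSymmConvexBody K) {ε : ℝ} (hε2 : ε ≤ 2) :
    Set.Nonempty { d | ∃ x y : E, gauge K x ≤ 1 ∧ gauge K y ≤ 1 ∧ ε ≤ gauge K (x - y) ∧
      d = 1 - gauge K ((2:ℝ)⁻¹ • (x + y)) } := by
  have hn' : 0 < n := Nat.pos_of_ne_zero hn
  obtain ⟨e, hedef⟩ : ∃ x : E, x = EuclideanSpace.single (⟨0, hn'⟩ : Fin n) (1:ℝ) := ⟨_, rfl⟩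
  have he : e ≠ 0 := by
    have h1 : e ⟨0, hn'⟩ = 1 := by simp [hedef]
    intro h
    rw [h] at h1
    simp at h1
  have hge : 0 < gauge K e := aux_gauge_pos hB he
  obtain ⟨x, hxdef⟩ : ∃ z : E, z = (gauge K e)⁻¹ • e := ⟨_, rfl⟩
  have hgx : gauge K x = 1 := by
    rw [hxdef, aux_gauge_smul hB (by positivity)]
    field_simp
  have hgnx : gauge K (-x) = 1 := by rw [aux_gauge_neg hB]; exact hgx
  have hsub : gauge K (x - -x) = 2 := by
    have h2 : x - -x = (2:ℝ) • x := by module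
    rw [h2, aux_gauge_smul hB (by norm_num), hgx]; norm_num
  exact ⟨1 - gauge K ((2:ℝ)⁻¹ • (x + -x)), x, -x, le_of_eq hgx, le_of_eq hgnx,
    hsub ▸ hε2, rfl⟩

set_option maxHeartbeats 2000000 in
theorem twoConvex_fireyIntersection' {n : ℕ}
    (K T : Set (EuclideanSpace ℝ (Fin n))) (γK γT : ℝ)
    (hK : IsSymmConvexBody K) (hT : IsSymmConvexBody T)
    (hγK : 0 < γK) (hγT : 0 < γT)
    (h2K : IsTwoConvex K γK) (h2T : IsTwoConvex T γT) :
    IsSymmConvexBody (fireyIntersection K T) ∧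
    IsTwoConvex (fireyIntersection K T) (min γK γT / 8) := by
  rcases Nat.eq_zero_or_pos n with hn0 | hnpos
  · -- degenerate case : contradiction with h2K
    exfalso
    subst hn0
    have h := h2K 1 one_pos (by norm_num)
    have hempty : { d | ∃ x y : EuclideanSpace ℝ (Fin 0), gauge K x ≤ 1 ∧ gauge K y ≤ 1 ∧
        (1:ℝ) ≤ gauge K (x - y) ∧ d = 1 - gauge K ((2:ℝ)⁻¹ • (x + y)) } = ∅ := by
      ext d
      simp only [Set.mem_setOf_eq, Set.mem_empty_iff_false, iff_false]
      rintro ⟨x, y, -, -, hxy, -⟩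
      have : x - y = 0 := Subsingleton.elim _ _
      rw [this, gauge_zero] at hxy
      linarith
    have hmod : modulusOfConvexity K 1 = 0 := by
      unfold modulusOfConvexity
      rw [hempty]
      exact Real.sInf_empty
    rw [hmod] at h
    nlinarith
  · have hn : n ≠ 0 := Nat.pos_iff_ne_zero.mp hnpos
    have hFbody := aux_firey_body hK hT
    refine ⟨hFbody, ?_⟩
    intro ε hε0 hε2
    have hq4K : γK ≤ 1/4 := aux_quarter hn hK h2K
    have hq4T : γT ≤ 1/4 := aux_quarter hn hT h2T
    obtain ⟨γ', hγ'def⟩ : ∃ x : ℝ, x = min γK γT := ⟨_, rfl⟩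
    have hγ'0 : 0 < γ' := by rw [hγ'def]; exact lt_min hγK hγT
    have hγ'K : γ' ≤ γK := hγ'def ▸ min_le_left _ _
    have hγ'T : γ' ≤ γT := hγ'def ▸ min_le_right _ _
    have hγ'4 : γ' ≤ 1/4 := le_trans hγ'K hq4K
    rw [← hγ'def]
    have hbound : ∀ d ∈ { d | ∃ x y : EuclideanSpace ℝ (Fin n),
        gauge (fireyIntersection K T) x ≤ 1 ∧ gauge (fireyIntersection K T) y ≤ 1 ∧
        ε ≤ gauge (fireyIntersection K T) (x - y) ∧
        d = 1 - gauge (fireyIntersection K T) ((2:ℝ)⁻¹ • (x + y)) },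
        γ' / 8 * ε ^ 2 ≤ d := by
      rintro d ⟨x, y, hx1, hy1, hεxy, rfl⟩
      rw [aux_gauge_firey hK hT] at hx1 hy1 hεxy
      rw [aux_gauge_firey hK hT]
      -- notation
      have hxs : gauge K x ^ 2 + gauge T x ^ 2 ≤ 1 := by
        have h0 : 0 ≤ gauge K x ^ 2 + gauge T x ^ 2 := by positivity
        nlinarith [Real.sq_sqrt h0, Real.sqrt_nonneg (gauge K x ^ 2 + gauge T x ^ 2)]
      have hys : gauge K y ^ 2 + gauge T y ^ 2 ≤ 1 := by
        have h0 : 0 ≤ gauge K y ^ 2 + gauge T y ^ 2 := by positivity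
        nlinarith [Real.sq_sqrt h0, Real.sqrt_nonneg (gauge K y ^ 2 + gauge T y ^ 2)]
      have hds : ε^2 ≤ gauge K (x - y) ^ 2 + gauge T (x - y) ^ 2 := by
        have h0 : 0 ≤ gauge K (x - y) ^ 2 + gauge T (x - y) ^ 2 := by positivity
        nlinarith [Real.sq_sqrt h0, Real.sqrt_nonneg (gauge K (x - y) ^ 2 + gauge T (x - y) ^ 2)]
      have kK := lemA hK hγK hq4K h2K x y
      have kT := lemA hT hγT hq4T h2T x y
      have hmsum : gauge K ((2:ℝ)⁻¹ • (x + y)) ^ 2 + gauge T ((2:ℝ)⁻¹ • (x + y)) ^ 2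
          ≤ 1 - γ'/4 * ε^2 := by
        have e1 : γ'/4 * gauge K (x-y)^2 ≤ γK/4 * gauge K (x-y)^2 := by
          nlinarith [sq_nonneg (gauge K (x-y))]
        have e2 : γ'/4 * gauge T (x-y)^2 ≤ γT/4 * gauge T (x-y)^2 := by
          nlinarith [sq_nonneg (gauge T (x-y))]
        nlinarith [kK, kT, e1, e2, hds]
      obtain ⟨q, hqdef⟩ : ∃ r : ℝ, r = γ'/4 * ε^2 := ⟨_, rfl⟩
      have hq0 : 0 ≤ q := by rw [hqdef]; positivity
      have hq1 : q ≤ 1 := by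
        rw [hqdef]
        nlinarith
      have hfin : Real.sqrt (gauge K ((2:ℝ)⁻¹ • (x + y)) ^ 2 + gauge T ((2:ℝ)⁻¹ • (x + y)) ^ 2)
          ≤ 1 - q/2 := by
        have h1 : gauge K ((2:ℝ)⁻¹ • (x + y)) ^ 2 + gauge T ((2:ℝ)⁻¹ • (x + y)) ^ 2
            ≤ (1 - q/2)^2 := by
          rw [hqdef] at *
          nlinarith [hmsum, sq_nonneg (γ'/4 * ε^2)]
        calc Real.sqrt (gauge K ((2:ℝ)⁻¹ • (x + y)) ^ 2 + gauge T ((2:ℝ)⁻¹ • (x + y)) ^ 2)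
            ≤ Real.sqrt ((1 - q/2)^2) := Real.sqrt_le_sqrt h1
          _ = 1 - q/2 := Real.sqrt_sq (by linarith)
      rw [hqdef] at hfin
      linarith
    exact le_csInf (aux_S_nonempty hn hFbody hε2) hbound

theorem twoConvex_fireyIntersection {n : ℕ}
    (K T : Set (EuclideanSpace ℝ (Fin n))) (γK γT : ℝ)
    (hK : IsSymmConvexBody K) (hT : IsSymmConvexBody T)
    (hγK : 0 < γK) (hγT : 0 < γT)
    (h2K : IsTwoConvex K γK) (h2T : IsTwoConvex T γT) :
    IsSymmConvexBody (fireyIntersection K T) ∧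
    IsTwoConvex (fireyIntersection K T) (min γK γT / 8) := by
  exact twoConvex_fireyIntersection' K T γK γT hK hT hγK hγT h2K h2T
end
end

section
/- Let K ⊂ ℝⁿ be a centrally symmetric convex body which is 2-convex with constant α ∈ (0,1). Then the norm ‖·‖_K has cotype 2 with constant at most C/√α for a universal constant C > 0; more precisely, for every m ≥ 1 and every x₁, …, x_m ∈ ℝⁿ: 2^{−m} Σ_{ε∈{−1,1}^m} ‖Σ_{i=1}^m ε_i x_i‖_K² ≥ α · Σ_{i=1}^m ‖x_i‖_K². -/
open MeasureTheory
open scoped RealInnerProductSpace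

noncomputable section

set_option maxHeartbeats 1000000

section Aux

variable {E : Type*} [NormedAddCommGroup E] [NormedSpace ℝ E]

theorem gauge_mod (K : Set E) (α : ℝ) (hconv : Convex ℝ K) (habs : Absorbent ℝ K)
    (h2 : IsTwoConvex K α) {ε : ℝ} (hε : 0 < ε) (hε2 : ε ≤ 2)
    {x y : E} (hx : gauge K x ≤ 1) (hy : gauge K y ≤ 1) (hxy : ε ≤ gauge K (x - y)) :
    gauge K ((2:ℝ)⁻¹ • (x + y)) ≤ 1 - α * ε ^ 2 := by
  have hbdd : BddBelow { d | ∃ x y : E, gauge K x ≤ 1 ∧ gauge K y ≤ 1 ∧ ε ≤ gauge K (x - y) ∧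
      d = 1 - gauge K ((2:ℝ)⁻¹ • (x + y)) } := by
    refine ⟨0, ?_⟩
    rintro d ⟨x', y', hx', hy', -, rfl⟩
    have h1 : gauge K ((2:ℝ)⁻¹ • (x' + y')) = 2⁻¹ * gauge K (x' + y') := by
      rw [gauge_smul_of_nonneg (by norm_num : (0:ℝ) ≤ 2⁻¹), smul_eq_mul]
    have h2' : gauge K (x' + y') ≤ gauge K x' + gauge K y' := gauge_add_le hconv habs _ _
    rw [h1]; linarith
  have hle : modulusOfConvexity K ε ≤ 1 - gauge K ((2:ℝ)⁻¹ • (x + y)) :=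
    csInf_le hbdd ⟨x, y, hx, hy, hxy, rfl⟩
  have := h2 ε hε hε2
  linarith


private theorem scalar_S4a (s t A B a : ℝ) (hs : 0 ≤ s) (ht : 0 < t) (hB : 0 < B)
    (hBs : B < s) (h1 : 2*s ≤ A + B) (h2 : 2*t ≤ A + B) (ha : 0 < a) (ha4 : 4*a ≤ 1)
    (hcase : s^2 ≤ (1-2*a)*t^2) :
    2*s^2 + 2*a*t^2 ≤ A^2 + B^2 := by
  have hst : s ≤ t := by nlinarith
  have hA : s + t - B ≤ A := by linarith
  have hA0 : 0 ≤ s + t - B := by linarith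
  nlinarith [mul_nonneg (sub_nonneg.2 hBs.le) (sub_nonneg.2 (hBs.le.trans hst)),
    sq_nonneg (s+t-B)]

private theorem scalar_S4b (s t A B a : ℝ) (ht : 0 < t) (hB : 0 < B) (hBs : B < s)
    (h1 : 2*s ≤ A + B) (h3 : A - B ≤ 2*t) (h4 : A ≤ s + t) (hBA : B ≤ A)
    (ha : 0 < a) (ha4 : 4*a ≤ 1)
    (hc : (1-2*a)*t^2 ≤ s^2)
    (hD4 : 2*a*((A+B)*t - (A-B)*s)^2 ≤ A^2*B*(A+B-2*s)) :
    2*s^2 + 2*a*t^2 ≤ A^2 + B^2 := by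
  have hs : 0 < s := lt_trans hB hBs
  have hQ : (s+t)^2 ≤ 8*(1-a)*s^2 := by
    nlinarith [sq_nonneg (4*(1-2*a)*s - t), mul_nonneg (mul_nonneg
      (by linarith : (0:ℝ) ≤ 1-4*a) (by linarith : (0:ℝ) ≤ 7-12*a)) (sq_nonneg t),
      mul_pos hs ht]
  have hPpos : 0 ≤ A + B - 2*s := by linarith
  have hdpos : 0 ≤ A - B := by linarith
  have hN : s*(2*t - (A-B)) ≤ (A+B)*t - (A-B)*s := by
    nlinarith [mul_nonneg hPpos ht.le]
  have hNnn : 0 ≤ s*(2*t-(A-B)) := mul_nonneg hs.le (by linarith)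
  have hsq : 2*a*(s*(2*t-(A-B)))^2 ≤ 2*a*((A+B)*t - (A-B)*s)^2 := by
    have h := mul_self_le_mul_self hNnn hN
    nlinarith
  have hA0 : 0 < A := lt_of_lt_of_le hB hBA
  have hA2 : A^2 ≤ (s+t)^2 := by nlinarith
  have h5 : A^2*B ≤ (s+t)^2*s := mul_le_mul hA2 hBs.le hB.le (by positivity)
  have hA2B : A^2*B*(A+B-2*s) ≤ (s+t)^2*s*(A+B-2*s) :=
    mul_le_mul_of_nonneg_right h5 hPpos
  have hkey : 2*a*s^2*(2*t-(A-B))^2 ≤ (s+t)^2*s*(A+B-2*s) := by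
    calc 2*a*s^2*(2*t-(A-B))^2 = 2*a*(s*(2*t-(A-B)))^2 := by ring
    _ ≤ 2*a*((A+B)*t - (A-B)*s)^2 := hsq
    _ ≤ A^2*B*(A+B-2*s) := hD4
    _ ≤ (s+t)^2*s*(A+B-2*s) := hA2B
  have hfin : 2*a*t^2*(s+t)^2 ≤ 4*a*s^2*(2*t-(A-B))^2 + (A-B)^2*(s+t)^2/2 := by
    nlinarith [sq_nonneg (4*a*s^2*(2*t-(A-B)) - ((s+t)^2/2)*(A-B)),
      mul_nonneg (mul_nonneg (le_of_lt ha) (sq_nonneg t))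
        (mul_nonneg (sq_nonneg (s+t)) (sub_nonneg.2 hQ)),
      mul_pos ha (mul_pos hs hs), sq_nonneg (s+t),
      mul_nonneg (mul_nonneg (le_of_lt ha) (sq_nonneg t)) (sub_nonneg.2 hQ)]
  have hmul : 2*a*t^2*(s+t)^2 ≤ (2*s*(A+B-2*s) + (A-B)^2/2)*(s+t)^2 := by
    nlinarith [hfin, hkey]
  have hst2 : 0 < (s+t)^2 := by positivity
  have hdiv : 2*a*t^2 ≤ 2*s*(A+B-2*s) + (A-B)^2/2 :=
    le_of_mul_le_mul_right (by linarith [hmul]) hst2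
  nlinarith [sq_nonneg (A+B-2*s), hdiv]

private theorem scalar_S5 (s t A B a : ℝ) (hs : 0 ≤ s) (ht : 0 < t) (hB : 0 < B)
    (hBA : B ≤ A) (h2 : 2*t ≤ A + B) (hD4c : 2*s ≤ A + B - 8*a*B)
    (ha : 0 < a) (ha4 : 4*a ≤ 1) :
    2*s^2 + 2*a*t^2 ≤ A^2 + B^2 := by
  rcases le_or_gt (s^2) ((1-a)*t^2) with hcs | hcs
  · nlinarith [sq_nonneg (A-B), sq_nonneg (A+B)]
  · have hat : a*t^2 ≤ s^2 := by nlinarith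
    rcases le_or_gt (1-8*a) 0 with hk | hk
    · have hA2s : 2*s ≤ A := by nlinarith [mul_nonneg (neg_nonneg.2 hk) hB.le]
      nlinarith [sq_nonneg B]
    · rcases le_or_gt (2*s) ((1-8*a)*B) with hkB | hkB
      · have hB2s : 2*s ≤ B := by
          nlinarith [mul_nonneg (by linarith : (0:ℝ) ≤ 8*a) hB.le]
        nlinarith [sq_nonneg A, mul_le_mul hB2s hB2s (by linarith) (by linarith : (0:ℝ) ≤ B)]
      · have hA : 2*s - (1-8*a)*B ≤ A := by linarith
        have hA0 : 0 ≤ 2*s - (1-8*a)*B := by linarith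
        have hAsq : (2*s - (1-8*a)*B)^2 ≤ A^2 := by nlinarith
        have hX : 0 ≤ (B*(1+(1-8*a)^2) - 2*s*(1-8*a))^2 := sq_nonneg _
        have hk1 : 0 ≤ 1-(1-8*a)^2 := by nlinarith
        have e1 : 0 ≤ 2*a*(7-32*a)*t^2 :=
          mul_nonneg (mul_nonneg (by linarith) (by linarith)) (sq_nonneg t)
        have e3 : 2*(1-a)*(1-(1-8*a)^2)*t^2 ≤ 2*(1-(1-8*a)^2)*s^2 := by
          nlinarith [mul_nonneg hk1 (sub_nonneg.2 hcs.le)]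
        have hpos : (0:ℝ) < 1+(1-8*a)^2 := by positivity
        rw [← mul_le_mul_iff_right₀ hpos]
        nlinarith [hX, hAsq, e1, e3, sq_nonneg B]

private theorem scalar_S3 (s t A B a : ℝ) (hs : 0 ≤ s) (ht : 0 < t) (hB : 0 < B)
    (hBA : B ≤ A) (h1 : 2*s ≤ A + B) (h3 : A - B ≤ 2*t) (ha : 0 < a) (ha4 : 4*a ≤ 1)
    (hN : (A+B)*t - (A-B)*s ≤ 0) :
    2*s^2 + 2*a*t^2 ≤ A^2 + B^2 := by
  have hABpos : 0 < A + B := by linarith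
  have h5 : A + B ≤ 2*s := by nlinarith
  have hseq : A + B = 2*s := le_antisymm h5 h1
  have hspos : 0 < s := by linarith
  have hd : 2*t ≤ A - B := by nlinarith
  have hdeq : A - B = 2*t := le_antisymm h3 hd
  nlinarith [sq_nonneg t]

theorem two_point_core (K : Set E) (α : ℝ) (hconv : Convex ℝ K) (habs : Absorbent ℝ K)
    (hsymm : ∀ x ∈ K, -x ∈ K) (hα : 0 < α) (h2 : IsTwoConvex K α)
    (u v : E) (hBA : gauge K (u - v) ≤ gauge K (u + v)) :
    2*(gauge K u)^2 + 2*α*(gauge K v)^2 ≤ (gauge K (u+v))^2 + (gauge K (u-v))^2 := by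
  set s := gauge K u with hs_def
  set t := gauge K v with ht_def
  set A := gauge K (u+v) with hA_def
  set B := gauge K (u-v) with hB_def
  have htri : ∀ x y : E, gauge K (x+y) ≤ gauge K x + gauge K y := gauge_add_le hconv habs
  have hneg : ∀ x : E, gauge K (-x) = gauge K x := gauge_neg hsymm
  have hsmul : ∀ (r : ℝ) (x : E), 0 ≤ r → gauge K (r • x) = r * gauge K x := by
    intro r x hr; rw [gauge_smul_of_nonneg hr, smul_eq_mul]
  have hs0 : 0 ≤ s := gauge_nonneg _
  have ht0 : 0 ≤ t := gauge_nonneg _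
  have hB0 : 0 ≤ B := gauge_nonneg _
  have hA_le : A ≤ s + t := htri u v
  have h2s : 2*s ≤ A + B := by
    have e : (2:ℝ) • u = (u+v) + (u-v) := by rw [two_smul]; abel
    have := htri (u+v) (u-v)
    rw [← e, hsmul 2 u (by norm_num)] at this
    linarith
  have h2t : 2*t ≤ A + B := by
    have e : (2:ℝ) • v = (u+v) + -(u-v) := by rw [two_smul]; abel
    have := htri (u+v) (-(u-v))
    rw [← e, hsmul 2 v (by norm_num), hneg] at this
    linarith
  have h3 : A - B ≤ 2*t := by
    have e : u + v = (u-v) + (2:ℝ) • v := by rw [two_smul]; abel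
    have := htri (u-v) ((2:ℝ) • v)
    rw [← e, hsmul 2 v (by norm_num)] at this
    linarith
  have h5 : s - t ≤ B := by
    have e : u = (u-v) + v := by abel
    have := htri (u-v) v
    rw [← e] at this; linarith
  have h6 : t - s ≤ B := by
    have e : v = -(u-v) + u := by abel
    have := htri (-(u-v)) u
    rw [← e, hneg] at this; linarith
  rcases eq_or_lt_of_le ht0 with ht0' | htpos
  · -- t = 0
    have hsB : s ≤ B := by linarith [h5, ht0'.symm ▸ (le_refl (0:ℝ))]
    have hsA : s ≤ A := le_trans hsB hBA
    have ht2 : t^2 = 0 := by rw [← ht0']; ring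
    nlinarith [pow_le_pow_left₀ hs0 hsB 2, pow_le_pow_left₀ hs0 hsA 2]
  · -- t > 0
    -- α ≤ 1/4
    have ha4 : 4*α ≤ 1 := by
      have hz : gauge K (t⁻¹ • v) = 1 := by
        rw [hsmul _ _ (inv_nonneg.2 ht0)]
        field_simp
        exact ht_def.symm
      have hz' : gauge K (-(t⁻¹ • v)) = 1 := by rw [hneg]; exact hz
      have hdiff : (2:ℝ) ≤ gauge K (t⁻¹ • v - -(t⁻¹ • v)) := by
        have e : t⁻¹ • v - -(t⁻¹ • v) = (2:ℝ) • (t⁻¹ • v) := by rw [two_smul]; abel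
        rw [e, hsmul 2 _ (by norm_num), hz]; norm_num
      have := gauge_mod K α hconv habs h2 (by norm_num : (0:ℝ) < 2) (le_refl 2)
        hz.le hz'.le hdiff
      have hmid : (2:ℝ)⁻¹ • (t⁻¹ • v + -(t⁻¹ • v)) = 0 := by simp
      rw [hmid, gauge_zero] at this
      nlinarith
    have hApos : 0 < A := by linarith
    have hAne : A ≠ 0 := hApos.ne'
    -- D1
    have hD1 : s*A + 4*α*t^2 ≤ A^2 := by
      have hx1 : gauge K (A⁻¹ • (u+v)) = 1 := by
        rw [hsmul _ _ (inv_nonneg.2 hApos.le)]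
        exact inv_mul_cancel₀ hAne
      have hy1 : gauge K (A⁻¹ • (u-v)) ≤ 1 := by
        rw [hsmul _ _ (inv_nonneg.2 hApos.le)]
        calc A⁻¹ * B ≤ A⁻¹ * A := by
              exact mul_le_mul_of_nonneg_left hBA (inv_nonneg.2 hApos.le)
        _ = 1 := inv_mul_cancel₀ hAne
      have hdiffe : A⁻¹ • (u+v) - A⁻¹ • (u-v) = A⁻¹ • ((2:ℝ) • v) := by module
      have hdiffg : gauge K (A⁻¹ • (u+v) - A⁻¹ • (u-v)) = A⁻¹ * (2*t) := by
        rw [hdiffe, hsmul _ _ (inv_nonneg.2 hApos.le), hsmul 2 v (by norm_num)]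
      have htA : t ≤ A := by linarith
      have hεpos : 0 < A⁻¹ * (2*t) := by positivity
      have hεle : A⁻¹ * (2*t) ≤ 2 := by
        have h := mul_le_mul_of_nonneg_left (show 2*t ≤ 2*A by linarith)
          (inv_nonneg.2 hApos.le)
        calc A⁻¹ * (2*t) ≤ A⁻¹ * (2*A) := h
        _ = 2 * (A⁻¹ * A) := by ring
        _ = 2 := by rw [inv_mul_cancel₀ hAne]; norm_num
      have hgm := gauge_mod K α hconv habs h2 hεpos hεle hx1.le hy1 hdiffg.ge
      have hmide : (2:ℝ)⁻¹ • (A⁻¹ • (u+v) + A⁻¹ • (u-v)) = A⁻¹ • u := by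
        have : ((2:ℝ)⁻¹ * A⁻¹ * 2) = A⁻¹ := by ring
        calc (2:ℝ)⁻¹ • (A⁻¹ • (u+v) + A⁻¹ • (u-v)) = ((2:ℝ)⁻¹ * A⁻¹ * 2) • u := by module
        _ = A⁻¹ • u := by rw [this]
      rw [hmide, hsmul _ _ (inv_nonneg.2 hApos.le)] at hgm
      -- hgm : A⁻¹ * s ≤ 1 - α * (A⁻¹*(2*t))^2
      have hmul := mul_le_mul_of_nonneg_right hgm (sq_nonneg A)
      have lhs_eq : (A⁻¹ * s) * A^2 = s * A := by field_simp
      have rhs_eq : (1 - α*(A⁻¹*(2*t))^2) * A^2 = A^2 - 4*α*t^2 := by field_simp; ring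
      rw [lhs_eq, rhs_eq] at hmul
      linarith
    rcases le_or_gt s B with hsB | hBs
    · -- S1
      have hsA : s ≤ B := hsB
      have h1' : s*s ≤ s*A := mul_le_mul_of_nonneg_left (le_trans hsB hBA) hs0
      have h2' : s^2 ≤ B^2 := by nlinarith
      have h3' : 0 ≤ α * t^2 := by positivity
      nlinarith
    · rcases eq_or_lt_of_le hB0 with hB0' | hBpos
      · -- B = 0
        have hst : s = t := by linarith [hB0'.symm.le]
        have hA2t : 2*t ≤ A := by linarith [hB0'.symm.le]
        nlinarith [sq_nonneg t, mul_pos htpos htpos]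
      · -- 0 < B
        have hBne : B ≠ 0 := hBpos.ne'
        have hx2 : gauge K (A⁻¹ • (u+v)) = 1 := by
          rw [hsmul _ _ (inv_nonneg.2 hApos.le)]
          exact inv_mul_cancel₀ hAne
        have hy2 : gauge K (B⁻¹ • (u-v)) = 1 := by
          rw [hsmul _ _ (inv_nonneg.2 hBpos.le)]
          exact inv_mul_cancel₀ hBne
        have hinvle : A⁻¹ ≤ B⁻¹ := by
          exact inv_anti₀ hBpos hBA
        have hdiff_lb : (A⁻¹+B⁻¹)*t - (B⁻¹-A⁻¹)*s ≤ gauge K (A⁻¹ • (u+v) - B⁻¹ • (u-v)) := by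
          have e : (A⁻¹+B⁻¹) • v = (A⁻¹ • (u+v) - B⁻¹ • (u-v)) + (B⁻¹-A⁻¹) • u := by module
          have htr := htri (A⁻¹ • (u+v) - B⁻¹ • (u-v)) ((B⁻¹-A⁻¹) • u)
          rw [← e] at htr
          rw [hsmul _ _ (by positivity : (0:ℝ) ≤ A⁻¹+B⁻¹)] at htr
          rw [hsmul _ _ (by linarith : (0:ℝ) ≤ B⁻¹-A⁻¹)] at htr
          linarith
        have hsum_lb : B⁻¹*(2*s) - (B⁻¹-A⁻¹)*A ≤ gauge K (A⁻¹ • (u+v) + B⁻¹ • (u-v)) := by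
          have e : B⁻¹ • ((2:ℝ) • u) = (A⁻¹ • (u+v) + B⁻¹ • (u-v)) + (B⁻¹-A⁻¹) • (u+v) := by
            module
          have htr := htri (A⁻¹ • (u+v) + B⁻¹ • (u-v)) ((B⁻¹-A⁻¹) • (u+v))
          rw [← e] at htr
          rw [hsmul _ _ (inv_nonneg.2 hBpos.le), hsmul 2 u (by norm_num)] at htr
          rw [hsmul _ _ (by linarith : (0:ℝ) ≤ B⁻¹-A⁻¹)] at htr
          linarith
        have hmid_lb : 2⁻¹*(B⁻¹*(2*s) - (B⁻¹-A⁻¹)*A) ≤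
            gauge K ((2:ℝ)⁻¹ • (A⁻¹ • (u+v) + B⁻¹ • (u-v))) := by
          rw [hsmul _ _ (by norm_num : (0:ℝ) ≤ (2:ℝ)⁻¹)]
          have : (0:ℝ) ≤ 2⁻¹ := by norm_num
          exact mul_le_mul_of_nonneg_left hsum_lb this
        set N' := (A⁻¹+B⁻¹)*t - (B⁻¹-A⁻¹)*s with hN'
        have hNid : N' * (A*B) = (A+B)*t - (A-B)*s := by
          rw [hN']; field_simp; ring
        rcases le_or_gt N' 0 with hN | hNpos
        · -- N ≤ 0 : S3
          have hNle : (A+B)*t - (A-B)*s ≤ 0 := by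
            rw [← hNid]
            exact mul_nonpos_of_nonpos_of_nonneg hN (by positivity)
          exact scalar_S3 s t A B α hs0 htpos hBpos hBA h2s h3 hα ha4 hNle
        · rcases le_or_gt N' 2 with hN2 | hN2
          · -- main D4+ case
            have hgm := gauge_mod K α hconv habs h2 hNpos hN2 hx2.le hy2.le hdiff_lb
            have hcomb : 2⁻¹*(B⁻¹*(2*s) - (B⁻¹-A⁻¹)*A) ≤ 1 - α * N'^2 :=
              le_trans hmid_lb hgm
            have step1 : 2*α*N'^2*B ≤ A + B - 2*s := by
              have hmm := mul_le_mul_of_nonneg_right hcomb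
                (by positivity : (0:ℝ) ≤ 2*B)
              have l : (2⁻¹*(B⁻¹*(2*s) - (B⁻¹-A⁻¹)*A))*(2*B) = 2*s - (A - B) := by
                field_simp
              have r : (1 - α * N'^2)*(2*B) = 2*B - 2*α*N'^2*B := by ring
              rw [l, r] at hmm
              linarith
            have hD4 : 2*α*((A+B)*t-(A-B)*s)^2 ≤ A^2*B*(A+B-2*s) := by
              have hmm := mul_le_mul_of_nonneg_right step1
                (by positivity : (0:ℝ) ≤ A^2*B)
              calc 2*α*((A+B)*t-(A-B)*s)^2 = 2*α*(N'*(A*B))^2 := by rw [hNid]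
              _ = (2*α*N'^2*B)*(A^2*B) := by ring
              _ ≤ (A+B-2*s)*(A^2*B) := hmm
              _ = A^2*B*(A+B-2*s) := by ring
            -- scalar conclusion
            rcases le_or_gt (s^2) ((1-2*α)*t^2) with hcs | hcs
            · exact scalar_S4a s t A B α hs0 htpos hBpos hBs h2s h2t hα ha4 hcs
            · exact scalar_S4b s t A B α htpos hBpos hBs h2s h3 hA_le hBA hα ha4 hcs.le hD4
          · -- ε > 2 case : S5
            have hgm := gauge_mod K α hconv habs h2 (by norm_num : (0:ℝ) < 2) (le_refl 2)
              hx2.le hy2.le (le_trans (by linarith) hdiff_lb)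
            have hcomb : 2⁻¹*(B⁻¹*(2*s) - (B⁻¹-A⁻¹)*A) ≤ 1 - α * 2^2 :=
              le_trans hmid_lb hgm
            have hD4c : 2*s ≤ A + B - 8*α*B := by
              have hmm := mul_le_mul_of_nonneg_right hcomb
                (by positivity : (0:ℝ) ≤ 2*B)
              have l : (2⁻¹*(B⁻¹*(2*s) - (B⁻¹-A⁻¹)*A))*(2*B) = 2*s - (A - B) := by
                field_simp
              have r : (1 - α * 2^2)*(2*B) = 2*B - 8*α*B := by ring
              rw [l, r] at hmm
              linarith
            exact scalar_S5 s t A B α hs0 htpos hBpos hBA h2t hD4c hα ha4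

theorem two_point (K : Set E) (α : ℝ) (hconv : Convex ℝ K) (habs : Absorbent ℝ K)
    (hsymm : ∀ x ∈ K, -x ∈ K) (hα : 0 < α) (h2 : IsTwoConvex K α)
    (u v : E) :
    2*(gauge K u)^2 + 2*α*(gauge K v)^2 ≤ (gauge K (u+v))^2 + (gauge K (u-v))^2 := by
  rcases le_total (gauge K (u-v)) (gauge K (u+v)) with h | h
  · exact two_point_core K α hconv habs hsymm hα h2 u v h
  · have e1 : u + -v = u - v := by abel
    have e2 : u - -v = u + v := by abel
    have hgv : gauge K (-v) = gauge K v := gauge_neg hsymm v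
    have := two_point_core K α hconv habs hsymm hα h2 u (-v) (by rw [e1, e2]; exact h)
    rw [e1, e2, hgv] at this
    linarith

theorem cotype_aux (K : Set E) (α : ℝ) (hconv : Convex ℝ K) (habs : Absorbent ℝ K)
    (hsymm : ∀ x ∈ K, -x ∈ K) (hα : 0 < α) (h2 : IsTwoConvex K α) :
    ∀ (m : ℕ) (x : Fin m → E), α * ∑ i, gauge K (x i) ^ 2 ≤
      ((2:ℝ)^m)⁻¹ * ∑ ε : Fin m → Bool,
        gauge K (∑ i, (if ε i then (1:ℝ) else -1) • x i) ^ 2 := by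
  intro m
  induction m with
  | zero =>
    intro x
    simp
  | succ m ih =>
    intro x
    set S : (Fin m → Bool) → E := fun ε' => ∑ i, (if ε' i then (1:ℝ) else -1) • x i.succ
      with hS
    let e : (Fin (m+1) → Bool) ≃ Bool × (Fin m → Bool) :=
      { toFun := fun ε => (ε 0, Fin.tail ε)
        invFun := fun p => Fin.cons p.1 p.2
        left_inv := fun ε => Fin.cons_self_tail ε
        right_inv := fun p => by
          refine Prod.ext ?_ ?_
          · simp
          · funext i; simp [Fin.tail] }
    have hre : ∑ ε : Fin (m+1) → Bool,
        gauge K (∑ i, (if ε i then (1:ℝ) else -1) • x i) ^ 2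
        = ∑ p : Bool × (Fin m → Bool),
            gauge K (∑ i, (if (Fin.cons p.1 p.2 : Fin (m+1) → Bool) i then (1:ℝ) else -1) • x i) ^ 2 := by
      refine Fintype.sum_equiv e _ _ ?_
      intro ε
      have : (Fin.cons (ε 0) (Fin.tail ε) : Fin (m+1) → Bool) = ε := Fin.cons_self_tail ε
      simp only [e, Equiv.coe_fn_mk, this]
    have hterm : ∀ (b : Bool) (ε' : Fin m → Bool),
        (∑ i : Fin (m+1), (if (Fin.cons b ε' : Fin (m+1) → Bool) i then (1:ℝ) else -1) • x i)
        = (if b then (1:ℝ) else -1) • x 0 + S ε' := by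
      intro b ε'
      rw [Fin.sum_univ_succ]
      simp [hS]
    have hsum2 : ∑ ε : Fin (m+1) → Bool,
        gauge K (∑ i, (if ε i then (1:ℝ) else -1) • x i) ^ 2
        = ∑ ε' : Fin m → Bool,
            (gauge K (S ε' + x 0) ^ 2 + gauge K (S ε' - x 0) ^ 2) := by
      rw [hre, Fintype.sum_prod_type, Fintype.sum_bool]
      rw [← Finset.sum_add_distrib]
      congr 1
      funext ε'
      rw [hterm true ε', hterm false ε']
      have e1 : (if true then (1:ℝ) else -1) • x 0 + S ε' = S ε' + x 0 := by
        simp [add_comm]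
      have e2 : (if false then (1:ℝ) else -1) • x 0 + S ε' = S ε' - x 0 := by
        simp only [if_neg Bool.false_ne_true]
        module
      rw [e1, e2]
    have hbound : ∀ ε' : Fin m → Bool,
        2*(gauge K (S ε'))^2 + 2*α*(gauge K (x 0))^2 ≤
          gauge K (S ε' + x 0) ^ 2 + gauge K (S ε' - x 0) ^ 2 :=
      fun ε' => two_point K α hconv habs hsymm hα h2 (S ε') (x 0)
    have hsum3 : 2 * (∑ ε' : Fin m → Bool, gauge K (S ε') ^ 2)
          + (2:ℝ)^m * (2*α*(gauge K (x 0))^2)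
        ≤ ∑ ε' : Fin m → Bool, (gauge K (S ε' + x 0) ^ 2 + gauge K (S ε' - x 0) ^ 2) := by
      have := Finset.sum_le_sum (fun ε' (_ : ε' ∈ Finset.univ) => hbound ε')
      rw [Finset.sum_add_distrib] at this
      simp only [Finset.sum_add_distrib, ← Finset.mul_sum, Finset.sum_const,
        Finset.card_univ] at this ⊢
      have hcard : (Fintype.card (Fin m → Bool)) = 2^m := by
        simp [Fintype.card_fun]
      rw [hcard] at this
      simp only [nsmul_eq_mul] at this
      push_cast at this ⊢
      linarith [this]
    have ihx := ih (fun i => x i.succ)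
    have hpow : (0:ℝ) < (2:ℝ)^m := by positivity
    have hpow1 : (0:ℝ) < (2:ℝ)^(m+1) := by positivity
    rw [hsum2]
    rw [Fin.sum_univ_succ]
    have hgoal : α * (gauge K (x 0) ^ 2 + ∑ i : Fin m, gauge K (x i.succ) ^ 2)
        = α * gauge K (x 0) ^ 2 + α * ∑ i : Fin m, gauge K (x i.succ) ^ 2 := by ring
    rw [hgoal]
    have step : α * ∑ i : Fin m, gauge K (x i.succ) ^ 2
        ≤ ((2:ℝ)^m)⁻¹ * ∑ ε' : Fin m → Bool, gauge K (S ε') ^ 2 := ihx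
    have expand : ((2:ℝ)^(m+1))⁻¹ * ∑ ε' : Fin m → Bool,
          (gauge K (S ε' + x 0) ^ 2 + gauge K (S ε' - x 0) ^ 2)
        ≥ ((2:ℝ)^(m+1))⁻¹ * (2 * (∑ ε' : Fin m → Bool, gauge K (S ε') ^ 2)
          + (2:ℝ)^m * (2*α*(gauge K (x 0))^2)) := by
      apply mul_le_mul_of_nonneg_left hsum3 (by positivity)
    have simpl : ((2:ℝ)^(m+1))⁻¹ * (2 * (∑ ε' : Fin m → Bool, gauge K (S ε') ^ 2)
          + (2:ℝ)^m * (2*α*(gauge K (x 0))^2))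
        = ((2:ℝ)^m)⁻¹ * (∑ ε' : Fin m → Bool, gauge K (S ε') ^ 2)
          + α*(gauge K (x 0))^2 := by
      field_simp
      ring
    rw [simpl] at expand
    linarith [expand, step]

end Aux

theorem twoConvex_cotype_two {n : ℕ} (K : Set (EuclideanSpace ℝ (Fin n)))
    (α : ℝ) (hK : IsSymmConvexBody K) (hα : 0 < α) (hα1 : α < 1)
    (h2 : IsTwoConvex K α) :
    ∀ (m : ℕ), 1 ≤ m → ∀ x : Fin m → EuclideanSpace ℝ (Fin n),
      α * ∑ i, gauge K (x i) ^ 2 ≤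
        ((2 : ℝ) ^ m)⁻¹ *
          ∑ ε : Fin m → Bool,
            gauge K (∑ i, (if ε i then (1 : ℝ) else -1) • x i) ^ 2 := by
  obtain ⟨hcomp, hconv, ⟨z, hz⟩, hKneg⟩ := hK
  have hsymm : ∀ x ∈ K, -x ∈ K := by
    intro x hx
    have hx' : x ∈ -K := hKneg ▸ hx
    exact Set.mem_neg.1 hx'
  have hintneg : -z ∈ interior K := by
    have h := (Homeomorph.neg (EuclideanSpace ℝ (Fin n))).image_interior K
    have h2' : -z ∈ (Homeomorph.neg (EuclideanSpace ℝ (Fin n))) '' interior K := ⟨z, hz, rfl⟩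
    rw [h] at h2'
    have h3' : -z ∈ interior (-K) := by
      simpa [Set.image_neg_eq_neg] using h2'
    rwa [← hKneg] at h3'
  have h0 : (0 : EuclideanSpace ℝ (Fin n)) ∈ interior K := by
    have hcv : Convex ℝ (interior K) := hconv.interior
    have := hcv hz hintneg (by norm_num : (0:ℝ) ≤ 1/2) (by norm_num : (0:ℝ) ≤ 1/2)
      (by norm_num)
    have he : (1/2 : ℝ) • z + (1/2 : ℝ) • (-z) = 0 := by module
    rwa [he] at this
  have habs : Absorbent ℝ K :=
    absorbent_nhds_zero (Filter.mem_of_superset (isOpen_interior.mem_nhds h0) interior_subset)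
  intro m _ x
  exact cotype_aux K α hconv habs hsymm hα h2 m x
end
end

section
/- There exists a universal constant C > 0 with the following property. Let K ⊂ ℝⁿ be a centrally symmetric convex body which is 2-smooth with constant β > 0. Then the norm ‖·‖_K has type 2 with constant at most C·√β; that is, for every m ≥ 1 and every x₁, …, x_m ∈ ℝⁿ: 2^{−m} Σ_{ε∈{−1,1}^m} ‖Σ_{i=1}^m ε_i x_i‖_K² ≤ C²·β · Σ_{i=1}^m ‖x_i‖_K². -/
open MeasureTheory
open scoped RealInnerProductSpace

noncomputable section

/-- The modulus of smoothness of `K`, defined via the gauge of `K`. -/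
def modulusOfSmoothness {E : Type*} [AddCommGroup E] [Module ℝ E]
    (K : Set E) (τ : ℝ) : ℝ :=
  sSup { d | ∃ x y : E, gauge K x ≤ 1 ∧ gauge K y ≤ τ ∧
    d = (gauge K (x + y) + gauge K (x - y)) / 2 - 1 }

/-- `K` is 2-smooth with constant `β`: `ρ_K(τ) ≤ β τ²` for all `τ > 0`. -/
def IsTwoSmooth {E : Type*} [AddCommGroup E] [Module ℝ E]
    (K : Set E) (β : ℝ) : Prop :=
  ∀ τ : ℝ, 0 < τ → modulusOfSmoothness K τ ≤ β * τ ^ 2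

open Set Metric

section Aux
variable {E : Type*} [NormedAddCommGroup E] [NormedSpace ℝ E] {K : Set E}

lemma zero_mem_interior_of_symm (hconv : Convex ℝ K) (hint : (interior K).Nonempty)
    (hsymm : K = -K) : (0:E) ∈ interior K := by
  obtain ⟨u, hu⟩ := hint
  have hnegint : interior (-K) = -(interior K) := by
    have h := (Homeomorph.neg E).preimage_interior K
    simpa using h.symm
  have hnu : -u ∈ interior K := by
    have h1 : interior K = -(interior K) := by conv_lhs => rw [hsymm, hnegint]
    rw [h1]; simpa using hu
  have := hconv.interior (x := u) (y := -u) hu hnu (a := 1/2) (b := 1/2)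
      (by norm_num) (by norm_num) (by norm_num)
  simpa using this

lemma gauge_symm_neg (hsymm : K = -K) (x : E) : gauge K (-x) = gauge K x := by
  apply gauge_neg
  intro y hy
  rw [hsymm] at hy
  simpa using hy

/-- Bound on the elements of the modulus-of-smoothness set. -/
lemma smoothness_set_bddAbove (hconv : Convex ℝ K) (habs : Absorbent ℝ K)
    (hsymm : K = -K) (τ : ℝ) :
    BddAbove { d | ∃ x y : E, gauge K x ≤ 1 ∧ gauge K y ≤ τ ∧
      d = (gauge K (x + y) + gauge K (x - y)) / 2 - 1 } := by
  refine ⟨τ, ?_⟩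
  rintro d ⟨x, y, hx, hy, rfl⟩
  have h1 : gauge K (x + y) ≤ 1 + τ :=
    (gauge_add_le hconv habs x y).trans (by linarith)
  have h2 : gauge K (x - y) ≤ 1 + τ := by
    have := gauge_add_le hconv habs x (-y)
    rw [gauge_symm_neg hsymm] at this
    calc gauge K (x - y) = gauge K (x + -y) := by rw [sub_eq_add_neg]
    _ ≤ gauge K x + gauge K y := this
    _ ≤ 1 + τ := by linarith
  linarith

/-- Apply 2-smoothness pointwise. -/
lemma smooth_pointwise (hconv : Convex ℝ K) (habs : Absorbent ℝ K) (hsymm : K = -K)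
    {β τ : ℝ} (hτ : 0 < τ) (hsm : IsTwoSmooth K β) {x y : E}
    (hx : gauge K x ≤ 1) (hy : gauge K y ≤ τ) :
    (gauge K (x + y) + gauge K (x - y)) / 2 - 1 ≤ β * τ ^ 2 := by
  have hmem : (gauge K (x + y) + gauge K (x - y)) / 2 - 1 ∈
      { d | ∃ x y : E, gauge K x ≤ 1 ∧ gauge K y ≤ τ ∧
        d = (gauge K (x + y) + gauge K (x - y)) / 2 - 1 } := ⟨x, y, hx, hy, rfl⟩
  exact (le_csSup (smoothness_set_bddAbove hconv habs hsymm τ) hmem).trans (hsm τ hτ)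

/-- 2-smoothness forces `β ≥ 1/4` provided there is a vector of gauge one. -/
lemma quarter_le_beta (hconv : Convex ℝ K) (habs : Absorbent ℝ K) (hsymm : K = -K)
    {β : ℝ} (hsm : IsTwoSmooth K β) {x : E} (hx : gauge K x = 1) :
    (1/4 : ℝ) ≤ β := by
  have h := smooth_pointwise hconv habs hsymm (by norm_num : (0:ℝ) < 2) hsm
      (x := x) (y := (2:ℝ) • x) (le_of_eq hx) ?_
  · have h1 : gauge K (x + (2:ℝ) • x) = 3 := by
      have : x + (2:ℝ) • x = (3:ℝ) • x := by module
      rw [this, gauge_smul_of_nonneg (by norm_num), hx]; norm_num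
    have h2 : gauge K (x - (2:ℝ) • x) = 1 := by
      have : x - (2:ℝ) • x = -x := by module
      rw [this, gauge_symm_neg hsymm, hx]
    rw [h1, h2] at h
    nlinarith
  · rw [gauge_smul_of_nonneg (by norm_num), hx]; norm_num

set_option maxHeartbeats 1000000 in
/-- The key two-point inequality. -/
lemma key_ineq (hconv : Convex ℝ K) (habs : Absorbent ℝ K) (hsymm : K = -K)
    {β : ℝ} (hβq : (1/4:ℝ) ≤ β) (hsm : IsTwoSmooth K β) (x y : E) :
    gauge K (x + y) ^ 2 + gauge K (x - y) ^ 2 ≤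
      2 * gauge K x ^ 2 + 18 * β * gauge K y ^ 2 := by
  obtain ⟨a, ha⟩ : ∃ r, gauge K x = r := ⟨_, rfl⟩
  obtain ⟨b, hb⟩ : ∃ r, gauge K y = r := ⟨_, rfl⟩
  obtain ⟨A, hA⟩ : ∃ r, gauge K (x + y) = r := ⟨_, rfl⟩
  obtain ⟨B, hB⟩ : ∃ r, gauge K (x - y) = r := ⟨_, rfl⟩
  rw [ha, hb, hA, hB]
  have ha0 : 0 ≤ a := by rw [← ha]; exact gauge_nonneg x
  have hb0 : 0 ≤ b := by rw [← hb]; exact gauge_nonneg y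
  have hA0 : 0 ≤ A := by rw [← hA]; exact gauge_nonneg _
  have hB0 : 0 ≤ B := by rw [← hB]; exact gauge_nonneg _
  have hAab : A ≤ a + b := by
    have h := gauge_add_le hconv habs x y
    rwa [ha, hb, hA] at h
  have hBab : B ≤ a + b := by
    have h := gauge_add_le hconv habs x (-y)
    rw [gauge_symm_neg hsymm, ha, hb, ← sub_eq_add_neg, hB] at h
    exact h
  have hdiff : (A - B)^2 ≤ 4*b^2 := by
    have h2y : gauge K ((2:ℝ) • y) = 2 * b := by
      rw [gauge_smul_of_nonneg (by norm_num : (0:ℝ) ≤ 2), smul_eq_mul, hb]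
    have h1 : A ≤ B + 2*b := by
      have h := gauge_add_le hconv habs (x - y) ((2:ℝ) • y)
      have he : x - y + (2:ℝ) • y = x + y := by module
      rw [h2y, he, hA, hB] at h
      linarith
    have h2 : B ≤ A + 2*b := by
      have h := gauge_add_le hconv habs (x + y) (-((2:ℝ) • y))
      have he : x + y + -((2:ℝ) • y) = x - y := by module
      rw [gauge_symm_neg hsymm, h2y, he, hA, hB] at h
      linarith
    nlinarith
  rcases eq_or_lt_of_le ha0 with ha0' | hapos
  · have hAb : A ≤ b := by rw [← ha0'] at hAab; linarith
    have hBb : B ≤ b := by rw [← ha0'] at hBab; linarith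
    nlinarith
  rcases eq_or_lt_of_le hb0 with hb0' | hbpos
  · have hAa : A ≤ a := by rw [← hb0'] at hAab; linarith
    have hBa : B ≤ a := by rw [← hb0'] at hBab; linarith
    nlinarith
  by_cases hcase : β * b^2 ≤ a^2
  · -- smooth case
    have hτ : 0 < b / a := div_pos hbpos hapos
    have hxu : gauge K (a⁻¹ • x) ≤ 1 := by
      rw [gauge_smul_of_nonneg (inv_nonneg.2 ha0), smul_eq_mul, ha,
        inv_mul_cancel₀ (ne_of_gt hapos)]
    have hyu : gauge K (a⁻¹ • y) ≤ b / a := by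
      rw [gauge_smul_of_nonneg (inv_nonneg.2 ha0), smul_eq_mul, hb, inv_mul_eq_div]
    have h := smooth_pointwise hconv habs hsymm hτ hsm hxu hyu
    have hplus : gauge K (a⁻¹ • x + a⁻¹ • y) = A / a := by
      have he : a⁻¹ • x + a⁻¹ • y = a⁻¹ • (x + y) := by module
      rw [he, gauge_smul_of_nonneg (inv_nonneg.2 ha0), smul_eq_mul, hA, inv_mul_eq_div]
    have hminus : gauge K (a⁻¹ • x - a⁻¹ • y) = B / a := by
      have he : a⁻¹ • x - a⁻¹ • y = a⁻¹ • (x - y) := by module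
      rw [he, gauge_smul_of_nonneg (inv_nonneg.2 ha0), smul_eq_mul, hB, inv_mul_eq_div]
    rw [hplus, hminus] at h
    obtain ⟨D, hD⟩ : ∃ D : ℝ, D = β * b^2 / a := ⟨_, rfl⟩
    have haD : a * D = β * b^2 := by rw [hD]; field_simp
    have hD0 : 0 ≤ D := by rw [hD]; positivity
    have hDa : D ≤ a := by
      rw [hD, div_le_iff₀ hapos]
      nlinarith
    have hD2 : D^2 ≤ β * b^2 := by
      have h' := mul_le_mul_of_nonneg_right hDa hD0
      calc D^2 = D*D := sq D
      _ ≤ a*D := h'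
      _ = β*b^2 := haD
    have hAB : A + B ≤ 2*a + 2*D := by
      rw [← add_div] at h
      have h2 : (A+B)/a ≤ 2*(β*(b/a)^2 + 1) := by linarith
      rw [div_le_iff₀ hapos] at h2
      have he : 2*(β*(b/a)^2+1)*a = 2*D + 2*a := by
        rw [hD]
        field_simp
      rw [he] at h2
      linarith
    have hsq : (A+B)^2 ≤ (2*a+2*D)^2 :=
      pow_le_pow_left₀ (add_nonneg hA0 hB0) hAB 2
    have hid : (A+B)^2 + (A-B)^2 = 2*(A^2+B^2) := by ring
    have hexp : (2*a+2*D)^2 = 4*a^2 + 8*(a*D) + 4*D^2 := by ring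
    have hb4 : b^2 ≤ 4*(β*b^2) := by nlinarith [sq_nonneg b]
    have hβb0 : 0 ≤ β * b^2 := by positivity
    linarith [hsq, hid, hexp, hb4, hdiff, hD2, haD, hβb0]
  · push_neg at hcase
    have h1 : A^2 ≤ (a+b)^2 := by nlinarith
    have h2 : B^2 ≤ (a+b)^2 := by nlinarith
    have hexp2 : (a+b)^2 = a^2 + 2*(a*b) + b^2 := by ring
    have hab : 2*(a*b) ≤ a^2 + b^2 := by nlinarith [sq_nonneg (a-b)]
    have hb4 : b^2 ≤ 4*(β*b^2) := by nlinarith [sq_nonneg b]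
    linarith [h1, h2, hexp2, hab, hb4, hcase]

/-- Averaging over signs, by induction. -/
lemma avg_induction {F : Type*} [AddCommGroup F] [Module ℝ F] (g : F → ℝ) (c : ℝ)
    (h0 : g 0 = 0)
    (hkey : ∀ x y : F, g (x+y)^2 + g (x-y)^2 ≤ 2*(g x)^2 + c*(g y)^2) :
    ∀ m : ℕ, ∀ x : Fin m → F,
      ∑ ε : Fin m → Bool, g (∑ i, (if ε i then (1:ℝ) else -1) • x i)^2
        ≤ 2^m * (c/2) * ∑ i, (g (x i))^2 := by
  intro m
  induction m with
  | zero => intro x; simp [h0]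
  | succ m ih =>
    intro x
    have hsplit :
        ∑ ε : Fin (m+1) → Bool, g (∑ i, (if ε i then (1:ℝ) else -1) • x i)^2
          = ∑ p : Bool × (Fin m → Bool),
              g (∑ i, (if (Fin.cons p.1 p.2 : Fin (m+1) → Bool) i then (1:ℝ) else -1) • x i)^2 := by
      exact (Fintype.sum_equiv (Fin.consEquiv fun _ => Bool)
        _ _ (fun p => by rfl)).symm
    rw [hsplit, Fintype.sum_prod_type_right]
    have hstep : ∀ ε' : Fin m → Bool,
        (∑ b : Bool, g (∑ i, (if (Fin.cons b ε' : Fin (m+1) → Bool) i then (1:ℝ) else -1) • x i)^2)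
          ≤ 2 * (g (∑ i : Fin m, (if ε' i then (1:ℝ) else -1) • x i.succ))^2
            + c * (g (x 0))^2 := by
      intro ε'
      obtain ⟨T, hT⟩ : ∃ T, T = ∑ i : Fin m, (if ε' i then (1:ℝ) else -1) • x i.succ :=
        ⟨_, rfl⟩
      have htrue : ∑ i, (if (Fin.cons true ε' : Fin (m+1) → Bool) i then (1:ℝ) else -1) • x i
          = T + x 0 := by
        rw [Fin.sum_univ_succ, hT]
        simp [add_comm]
      have hfalse : ∑ i, (if (Fin.cons false ε' : Fin (m+1) → Bool) i then (1:ℝ) else -1) • x i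
          = T - x 0 := by
        rw [Fin.sum_univ_succ, hT]
        simp [sub_eq_add_neg, add_comm]
      rw [Fintype.sum_bool, htrue, hfalse, ← hT]
      exact hkey T (x 0)
    calc ∑ ε' : Fin m → Bool, ∑ b : Bool,
            g (∑ i, (if (Fin.cons b ε' : Fin (m+1) → Bool) i then (1:ℝ) else -1) • x i)^2
        ≤ ∑ ε' : Fin m → Bool,
            (2 * (g (∑ i : Fin m, (if ε' i then (1:ℝ) else -1) • x i.succ))^2
              + c * (g (x 0))^2) := Finset.sum_le_sum fun ε' _ => hstep ε'
      _ = 2 * (∑ ε' : Fin m → Bool,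
            (g (∑ i : Fin m, (if ε' i then (1:ℝ) else -1) • x (Fin.succ i)))^2)
            + 2^m * (c * (g (x 0))^2) := by
          rw [Finset.sum_add_distrib, Finset.mul_sum, Finset.sum_const]
          simp [Finset.card_univ, Fintype.card_fun]
      _ ≤ 2 * (2^m * (c/2) * ∑ i : Fin m, (g (x (Fin.succ i)))^2)
            + 2^m * (c * (g (x 0))^2) := by
          have h := ih (fun i => x (Fin.succ i))
          linarith [h]
      _ ≤ 2^(m+1) * (c/2) * ∑ i : Fin (m+1), (g (x i))^2 := by
          rw [Fin.sum_univ_succ]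
          apply le_of_eq
          ring

end Aux

theorem twoSmooth_type_two :
    ∃ C : ℝ, 0 < C ∧ ∀ (n : ℕ) (K : Set (EuclideanSpace ℝ (Fin n))) (β : ℝ),
      IsSymmConvexBody K → 0 < β → IsTwoSmooth K β →
      ∀ (m : ℕ), 1 ≤ m → ∀ x : Fin m → EuclideanSpace ℝ (Fin n),
        ((2 : ℝ) ^ m)⁻¹ *
            ∑ ε : Fin m → Bool,
              gauge K (∑ i, (if ε i then (1 : ℝ) else -1) • x i) ^ 2 ≤
          C ^ 2 * β * ∑ i, gauge K (x i) ^ 2 := by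
  refine ⟨3, by norm_num, ?_⟩
  intro n K β hbody hβ hsm m _ x
  obtain ⟨hcomp, hconv, hint, hsymm⟩ := hbody
  have h0mem : (0 : EuclideanSpace ℝ (Fin n)) ∈ interior K :=
    zero_mem_interior_of_symm hconv hint hsymm
  have habs : Absorbent ℝ K := absorbent_nhds_zero (mem_interior_iff_mem_nhds.1 h0mem)
  rcases subsingleton_or_nontrivial (EuclideanSpace ℝ (Fin n)) with hss | hnt
  · have hg : ∀ v : EuclideanSpace ℝ (Fin n), gauge K v = 0 := fun v => by
      rw [Subsingleton.elim v 0, gauge_zero]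
    simp only [hg]
    simp
  · obtain ⟨v, hv⟩ := exists_ne (0 : EuclideanSpace ℝ (Fin n))
    have hvb : Bornology.IsVonNBounded ℝ K :=
      NormedSpace.isVonNBounded_of_isBounded ℝ hcomp.isBounded
    have hgv : 0 < gauge K v := (gauge_pos habs hvb).2 hv
    have hu : gauge K ((gauge K v)⁻¹ • v) = 1 := by
      rw [gauge_smul_of_nonneg (inv_nonneg.2 hgv.le), smul_eq_mul,
        inv_mul_cancel₀ (ne_of_gt hgv)]
    have hβq : (1/4 : ℝ) ≤ β := quarter_le_beta hconv habs hsymm hsm hu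
    have hkey := key_ineq hconv habs hsymm hβq hsm
    have h := avg_induction (gauge K) (18*β) gauge_zero
      (by intro a b; have := hkey a b; linarith) m x
    have h2pos : (0:ℝ) < (2:ℝ)^m := by positivity
    have hfin := mul_le_mul_of_nonneg_left h (inv_nonneg.2 h2pos.le)
    calc ((2 : ℝ) ^ m)⁻¹ *
            ∑ ε : Fin m → Bool,
              gauge K (∑ i, (if ε i then (1 : ℝ) else -1) • x i) ^ 2
        ≤ ((2:ℝ)^m)⁻¹ * (2^m * (18*β/2) * ∑ i, gauge K (x i) ^ 2) := hfin
      _ = 3^2 * β * ∑ i, gauge K (x i) ^ 2 := by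
          field_simp
          ring
end
end
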